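/- arXiv:math/9606228 — 4 statements merged into one kernel-verified Lean document; each statement's English description precedes it below -/
import Mathlib

section
/- For any two conditions ⟨a₀,w₀⟩ and ⟨a₁,w₁⟩ of Q⊚: they are incompatible in Q⊚ if and only if either there are η ∈ w₀ and l ∈ ω with η↾l ∈ a₁ ∖ a₀, or there are η ∈ w₁ and l ∈ ω with η↾l ∈ a₀ ∖ a₁. -/
/-- Restriction `η↾l` of `η ∈ 2^ω` to its first `l` entries, as a finite binary sequence. -/
def restrict (η : ℕ → Bool) (l : ℕ) : List Bool := List.ofFn (fun i : Fin l => η i)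

/-- Conditions of the forcing notion `Q⊚`: pairs `⟨a, w⟩` with `a` a finite set of
finite binary sequences and `w` a finite set of elements of Cantor space. -/
abbrev QCirc : Type := Finset (List Bool) × Finset (ℕ → Bool)

/-- The order of `Q⊚` (a stronger condition is the greater one). -/
def QCirc.le (p q : QCirc) : Prop :=
  p.1 ⊆ q.1 ∧ p.2 ⊆ q.2 ∧
    ∀ η ∈ p.2, ∀ l : ℕ, restrict η l ∈ q.1 → restrict η l ∈ p.1

/-- Compatibility in a forcing notion: a common upper bound exists. -/
def PCompat {P : Type} (le : P → P → Prop) (p q : P) : Prop :=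
  ∃ r, le p r ∧ le q r


/-- Two conditions `⟨a₀,w₀⟩`, `⟨a₁,w₁⟩` of `Q⊚` are incompatible iff either some `η ∈ w₀`
and `l ∈ ω` satisfy `η↾l ∈ a₁ \ a₀`, or symmetrically with the roles of `0` and `1`
interchanged. -/
theorem qcirc_incompatibility_characterization
    (a₀ a₁ : Finset (List Bool)) (w₀ w₁ : Finset (ℕ → Bool)) :
    ¬ PCompat QCirc.le (a₀, w₀) (a₁, w₁) ↔
      (∃ η ∈ w₀, ∃ l : ℕ, restrict η l ∈ a₁ ∧ restrict η l ∉ a₀) ∨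
      (∃ η ∈ w₁, ∃ l : ℕ, restrict η l ∈ a₀ ∧ restrict η l ∉ a₁) := by
  classical
  constructor
  · intro h
    by_contra hc
    push_neg at hc
    obtain ⟨h0, h1⟩ := hc
    apply h
    refine ⟨(a₀ ∪ a₁, w₀ ∪ w₁), ⟨Finset.subset_union_left, Finset.subset_union_left, ?_⟩,
      ⟨Finset.subset_union_right, Finset.subset_union_right, ?_⟩⟩
    · intro η hη l hl
      rcases Finset.mem_union.1 hl with h' | h'
      · exact h'
      · by_contra hna
        exact hna (h0 η hη l h')
    · intro η hη l hl
      rcases Finset.mem_union.1 hl with h' | h'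
      · by_contra hna
        exact hna (h1 η hη l h')
      · exact h'
  · rintro (⟨η, hη, l, h1, h0⟩ | ⟨η, hη, l, h0, h1⟩) ⟨r, ⟨s0, _, t0⟩, ⟨s1, _, t1⟩⟩
    · exact h0 (t0 η hη l (s1 h1))
    · exact h1 (t1 η hη l (s0 h0))
end

section
/- Let l₀ ∈ ω and let ⟨a₀,w₀⟩, ⟨a₁,w₁⟩, ⟨a₁,w₂⟩ be conditions of Q⊚ such that every sequence in a₀ ∪ a₁ has length at most l₀ and {η↾l₀ : η ∈ w₁} = {η↾l₀ : η ∈ w₂}. Then ⟨a₀,w₀⟩ is incompatible with ⟨a₁,w₁⟩ in Q⊚ if and only if ⟨a₀,w₀⟩ is incompatible with ⟨a₁,w₂⟩ in Q⊚. -/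
lemma restrict_length (η : ℕ → Bool) (l : ℕ) : (restrict η l).length = l := by
  simp [restrict]

lemma restrict_take (η : ℕ → Bool) {l l₀ : ℕ} (h : l ≤ l₀) :
    (restrict η l₀).take l = restrict η l := by
  apply List.ext_getElem
  · simp [restrict]; omega
  · intro i h1 h2
    simp [restrict, List.getElem_take]

lemma compat_iff (a₀ a₁ : Finset (List Bool)) (w₀ w : Finset (ℕ → Bool)) :
    PCompat QCirc.le (a₀, w₀) (a₁, w) ↔
      ((∀ η ∈ w₀, ∀ l, restrict η l ∈ a₁ → restrict η l ∈ a₀) ∧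
       (∀ η ∈ w, ∀ l, restrict η l ∈ a₀ → restrict η l ∈ a₁)) := by
  classical
  constructor
  · rintro ⟨⟨b, v⟩, ⟨h1, h2, h3⟩, ⟨h1', h2', h3'⟩⟩
    exact ⟨fun η hη l hl => h3 η hη l (h1' hl),
           fun η hη l hl => h3' η hη l (h1 hl)⟩
  · rintro ⟨h1, h2⟩
    refine ⟨(a₀ ∪ a₁, w₀ ∪ w), ⟨Finset.subset_union_left, Finset.subset_union_left, ?_⟩,
      ⟨Finset.subset_union_right, Finset.subset_union_right, ?_⟩⟩
    · intro η hη l hl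
      rcases Finset.mem_union.1 hl with h | h
      · exact h
      · exact h1 η hη l h
    · intro η hη l hl
      rcases Finset.mem_union.1 hl with h | h
      · exact h2 η hη l h
      · exact h

/-- If all sequences in `a₀ ∪ a₁` have length at most `l₀` and `w₁`, `w₂` have the same
set of restrictions to length `l₀`, then `⟨a₀,w₀⟩ ⊥ ⟨a₁,w₁⟩` iff `⟨a₀,w₀⟩ ⊥ ⟨a₁,w₂⟩`. -/
theorem qcirc_incompat_depends_on_restrictions
    (l₀ : ℕ) (a₀ a₁ : Finset (List Bool)) (w₀ w₁ w₂ : Finset (ℕ → Bool))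
    (hlen : ∀ ν ∈ a₀ ∪ a₁, ν.length ≤ l₀)
    (hres : (fun η => restrict η l₀) '' ↑w₁ = (fun η => restrict η l₀) '' ↑w₂) :
    ¬ PCompat QCirc.le (a₀, w₀) (a₁, w₁) ↔ ¬ PCompat QCirc.le (a₀, w₀) (a₁, w₂) := by
  have key : ∀ w w' : Finset (ℕ → Bool),
      (fun η => restrict η l₀) '' ↑w = (fun η => restrict η l₀) '' ↑w' →
      (∀ η ∈ w', ∀ l, restrict η l ∈ a₀ → restrict η l ∈ a₁) →
      (∀ η ∈ w, ∀ l, restrict η l ∈ a₀ → restrict η l ∈ a₁) := by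
    intro w w' h hcond η hη l hl
    have : restrict η l₀ ∈ (fun η => restrict η l₀) '' ↑w' := by
      rw [← h]; exact ⟨η, hη, rfl⟩
    obtain ⟨η', hη', heq⟩ := this
    have hll : l ≤ l₀ := by
      have := hlen _ (Finset.mem_union_left _ hl)
      rwa [restrict_length] at this
    have : restrict η' l = restrict η l := by
      rw [← restrict_take η' hll, ← restrict_take η hll]; exact congrArg (List.take l) heq
    rw [← this] at hl ⊢
    exact hcond η' hη' l hl
  rw [not_iff_not, compat_iff, compat_iff]
  constructor
  · rintro ⟨h1, h2⟩; exact ⟨h1, key w₂ w₁ hres.symm h2⟩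
  · rintro ⟨h1, h2⟩; exact ⟨h1, key w₁ w₂ hres h2⟩
end

section
/- Let P be a forcing notion with least element 0 and let ⟨A_n : n ∈ ω⟩ be maximal antichains of P satisfying: (1) A₀ = {0}; (2) every p ∈ A_{n+1} has some q ∈ A_n with q ≤ p; (3) every p ∈ A_n has infinitely many q ∈ A_{n+1} with p ≤ q. Let C be the forcing notion whose conditions are finite partial functions h with dom(h) ⊆ ⋃_n A_n and values in 2^{<ω} such that p₁ ≤ p₂ in dom(h) implies h(p₁) ⊆ h(p₂), ordered by inclusion. Then: (a) for every p ∈ ⋃_n A_n the set {h ∈ C : p ∈ dom(h)} is dense in C; and (b) for every q ∈ P, m ∈ ω and h₀ ∈ C, the set J¹_{q,m,h₀} = { h ∈ C : either h is incompatible with h₀ in C, or for every p ∈ dom(h₀) such that for some n ∈ ω, p ∈ A_n and the set {p′ ∈ A_{n+1} : p ≤ p′ and p′ compatible with q} is infinite, and for every ν ∈ 2^m with h₀(p) ⊆ ν, there is p′ ∈ dom(h) with p ≤ p′, p′ compatible with q, and h(p′) = ν } is dense in C. -/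
/-- A set `A ⊆ P` is an antichain if its elements are pairwise incompatible. -/
def PAntichain {P : Type} (le : P → P → Prop) (A : Set P) : Prop :=
  ∀ p ∈ A, ∀ q ∈ A, p ≠ q → ¬ PCompat le p q

/-- A maximal antichain: an antichain such that every condition is compatible
with some of its members. -/
def PMaxAntichain {P : Type} (le : P → P → Prop) (A : Set P) : Prop :=
  PAntichain le A ∧ ∀ p : P, ∃ q ∈ A, PCompat le p q

/-- A set `D` is dense in a forcing notion if every condition has an upper bound in `D`. -/
def PDense {P : Type} (le : P → P → Prop) (D : Set P) : Prop :=
  ∀ p : P, ∃ q ∈ D, le p q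

/-- Conditions of the forcing notion `C`: finite partial functions `h` with domain contained
in `⋃ₙ Aₙ`, values in `2^{<ω}`, which are monotone with respect to end-extension. -/
structure CCond (P : Type) [PartialOrder P] (A : ℕ → Set P) where
  /-- the finite partial function, coded with values in `Option (List Bool)` -/
  h : P → Option (List Bool)
  dom_finite : {p : P | h p ≠ none}.Finite
  dom_subset : ∀ p : P, h p ≠ none → ∃ n : ℕ, p ∈ A n
  mono : ∀ (p₁ p₂ : P) (ν₁ ν₂ : List Bool),
    h p₁ = some ν₁ → h p₂ = some ν₂ → p₁ ≤ p₂ → ν₁ <+: ν₂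

/-- The order of `C` is inclusion of partial functions. -/
def CCond.le {P : Type} [PartialOrder P] {A : ℕ → Set P} (h₁ h₂ : CCond P A) : Prop :=
  ∀ (p : P) (ν : List Bool), h₁.h p = some ν → h₂.h p = some ν

noncomputable section Aux

variable {P : Type} [PartialOrder P] {A : ℕ → Set P}

lemma CCond.le_refl' (g : CCond P A) : CCond.le g g := fun _ _ h => h

lemma CCond.le_trans' {g₁ g₂ g₃ : CCond P A} (h12 : CCond.le g₁ g₂) (h23 : CCond.le g₂ g₃) :
    CCond.le g₁ g₃ := fun p ν h => h23 p ν (h12 p ν h)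

/-- elements of levels are comparable when compatible (tree structure) -/
lemma tree_le (hmax : ∀ n, PMaxAntichain (P := P) (· ≤ ·) (A n))
    (hdown : ∀ n, ∀ p ∈ A (n + 1), ∃ q ∈ A n, q ≤ p) :
    ∀ (d n : ℕ), ∀ r ∈ A n, ∀ s ∈ A (n + d), PCompat (· ≤ ·) r s → r ≤ s := by
  intro d
  induction d with
  | zero =>
    intro n r hr s hs hc
    rcases eq_or_ne r s with h | h
    · exact h ▸ le_refl r
    · exact absurd hc ((hmax n).1 r hr s hs h)
  | succ d ih =>
    intro n r hr s hs hc
    obtain ⟨t, ht, hts⟩ := hdown (n + d) s hs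
    obtain ⟨u, hru, hsu⟩ := hc
    exact le_trans (ih n r hr t ht ⟨u, hru, le_trans hts hsu⟩) hts

lemma tree_le' (hmax : ∀ n, PMaxAntichain (P := P) (· ≤ ·) (A n))
    (hdown : ∀ n, ∀ p ∈ A (n + 1), ∃ q ∈ A n, q ≤ p)
    {n k : ℕ} (hnk : n ≤ k) {r s : P} (hr : r ∈ A n) (hs : s ∈ A k)
    (hc : PCompat (· ≤ ·) r s) : r ≤ s := by
  obtain ⟨d, rfl⟩ := Nat.exists_eq_add_of_le hnk
  exact tree_le hmax hdown d n r hr s hs hc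

open Classical in
/-- extend a condition by one point -/
def CCond.extend (g : CCond P A) (p : P) (ν : List Bool) (hp : ∃ n, p ∈ A n)
    (hbelow : ∀ r μ, g.h r = some μ → r ≤ p → μ <+: ν)
    (habove : ∀ r μ, g.h r = some μ → p ≤ r → ν <+: μ) : CCond P A where
  h := fun r => if r = p then some ν else g.h r
  dom_finite := by
    apply Set.Finite.subset (g.dom_finite.union (Set.finite_singleton p))
    intro r hr
    simp only [Set.mem_setOf_eq] at hr
    by_cases h : r = p
    · exact Or.inr h
    · exact Or.inl (by simpa [h] using hr)
  dom_subset := by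
    intro r hr
    by_cases h : r = p
    · exact h ▸ hp
    · exact g.dom_subset r (by simpa [h] using hr)
  mono := by
    intro p₁ p₂ ν₁ ν₂ h1 h2 hle
    change (if p₁ = p then some ν else g.h p₁) = some ν₁ at h1
    change (if p₂ = p then some ν else g.h p₂) = some ν₂ at h2
    by_cases e1 : p₁ = p
    · by_cases e2 : p₂ = p
      · rw [if_pos e1] at h1; rw [if_pos e2] at h2
        injection h1 with h1; injection h2 with h2
        rw [← h1, ← h2]
      · rw [if_pos e1] at h1; rw [if_neg e2] at h2
        injection h1 with h1
        exact h1 ▸ habove p₂ ν₂ h2 (e1 ▸ hle)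
    · by_cases e2 : p₂ = p
      · rw [if_neg e1] at h1; rw [if_pos e2] at h2
        injection h2 with h2
        exact h2 ▸ hbelow p₁ ν₁ h1 (e2 ▸ hle)
      · rw [if_neg e1] at h1; rw [if_neg e2] at h2
        exact g.mono p₁ p₂ ν₁ ν₂ h1 h2 hle

open Classical in
lemma CCond.le_extend (g : CCond P A) (p : P) (ν : List Bool) (hp : ∃ n, p ∈ A n)
    (hnone : g.h p = none)
    (hbelow : ∀ r μ, g.h r = some μ → r ≤ p → μ <+: ν)
    (habove : ∀ r μ, g.h r = some μ → p ≤ r → ν <+: μ) :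
    CCond.le g (g.extend p ν hp hbelow habove) := by
  intro r μ hr
  have hrp : r ≠ p := by rintro rfl; rw [hnone] at hr; exact nomatch hr
  show (if r = p then some ν else g.h r) = some μ
  rw [if_neg hrp]; exact hr

open Classical in
lemma CCond.extend_self (g : CCond P A) (p : P) (ν : List Bool) (hp : ∃ n, p ∈ A n)
    (hbelow : ∀ r μ, g.h r = some μ → r ≤ p → μ <+: ν)
    (habove : ∀ r μ, g.h r = some μ → p ≤ r → ν <+: μ) :
    (g.extend p ν hp hbelow habove).h p = some ν := by
  show (if p = p then some ν else g.h p) = some ν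
  rw [if_pos rfl]

end Aux

/-- Let `P` be a forcing notion with least element `0` and `⟨Aₙ : n ∈ ω⟩` maximal antichains
with `A₀ = {0}`, each member of `Aₙ₊₁` extending a member of `Aₙ`, and each member of `Aₙ`
having infinitely many extensions in `Aₙ₊₁`. Then in the forcing notion `C`:
(a) for `p ∈ ⋃ₙ Aₙ`, the set `{h ∈ C : p ∈ dom h}` is dense; and
(b) for `q ∈ P`, `m ∈ ω`, `h₀ ∈ C`, the set `J¹_{q,m,h₀}` is dense. -/
theorem ccond_dense_sets (P : Type) [PartialOrder P] (z : P) (hz : ∀ p : P, z ≤ p)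
    (A : ℕ → Set P) (hmax : ∀ n, PMaxAntichain (P := P) (· ≤ ·) (A n))
    (h0 : A 0 = {z})
    (hdown : ∀ n, ∀ p ∈ A (n + 1), ∃ q ∈ A n, q ≤ p)
    (hsplit : ∀ n, ∀ p ∈ A n, {q ∈ A (n + 1) | p ≤ q}.Infinite) :
    (∀ p : P, (∃ n, p ∈ A n) →
      PDense (CCond.le (P := P) (A := A)) {h : CCond P A | h.h p ≠ none}) ∧
    (∀ (q : P) (m : ℕ) (h₀ : CCond P A),
      PDense (CCond.le (P := P) (A := A))
        {h : CCond P A |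
          ¬ PCompat (CCond.le (P := P) (A := A)) h h₀ ∨
          ∀ (p : P) (ν₀ : List Bool), h₀.h p = some ν₀ →
            (∃ n : ℕ, p ∈ A n ∧
              {p' ∈ A (n + 1) | p ≤ p' ∧ PCompat (· ≤ ·) p' q}.Infinite) →
            ∀ ν : List Bool, ν.length = m → ν₀ <+: ν →
              ∃ p' : P, h.h p' = some ν ∧ p ≤ p' ∧ PCompat (· ≤ ·) p' q}) := by
  classical
  -- a single-point extension step used in part (b)
  have step : ∀ (q : P) (h₀ g : CCond P A), CCond.le h₀ g →
      ∀ (p : P) (ν₀ ν : List Bool), h₀.h p = some ν₀ → ν₀ <+: ν →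
      ∀ n : ℕ, p ∈ A n → {p' ∈ A (n + 1) | p ≤ p' ∧ PCompat (· ≤ ·) p' q}.Infinite →
      ∃ g' : CCond P A, CCond.le g g' ∧
        ∃ p' : P, g'.h p' = some ν ∧ p ≤ p' ∧ PCompat (· ≤ ·) p' q := by
    intro q h₀ g hg p ν₀ ν hp0 hpre n hpn hinf
    -- bad set: points of A (n+1) below some element of dom g
    set bad : Set P := {x | x ∈ A (n + 1) ∧ ∃ r, g.h r ≠ none ∧ x ≤ r} with hbad_def
    have hbadfin : bad.Finite := by
      have hsub : bad ⊆ ⋃ r ∈ {r | g.h r ≠ none}, {x | x ∈ A (n + 1) ∧ x ≤ r} := by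
        rintro x ⟨hx1, r, hr1, hr2⟩
        exact Set.mem_biUnion hr1 ⟨hx1, hr2⟩
      refine Set.Finite.subset (Set.Finite.biUnion g.dom_finite ?_) hsub
      intro r _
      apply Set.Subsingleton.finite
      rintro x ⟨hx1, hx2⟩ y ⟨hy1, hy2⟩
      by_contra hne
      exact (hmax (n + 1)).1 x hx1 y hy1 hne ⟨r, hx2, hy2⟩
    -- choose a fresh point
    obtain ⟨p', hp'⟩ := (hinf.diff (g.dom_finite.union hbadfin)).nonempty
    obtain ⟨⟨hp'A, hpp', hp'q⟩, hp'not⟩ := hp'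
    have hp'dom : g.h p' = none := by
      by_contra hne
      exact hp'not (Or.inl hne)
    have hp'bad : p' ∉ bad := fun hb => hp'not (Or.inr hb)
    have hgp : g.h p = some ν₀ := hg p ν₀ hp0
    have hbelow : ∀ r μ, g.h r = some μ → r ≤ p' → μ <+: ν := by
      intro r μ hr hrp'
      obtain ⟨k, hk⟩ := g.dom_subset r (by rw [hr]; exact Option.some_ne_none _)
      rcases le_or_gt k n with hkn | hnk
      · have hrp : r ≤ p := tree_le' hmax hdown hkn hk hpn ⟨p', hrp', hpp'⟩
        exact (g.mono r p μ ν₀ hr hgp hrp).trans hpre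
      · have : p' ≤ r := tree_le' hmax hdown hnk hp'A hk ⟨p', le_refl p', hrp'⟩
        have : r = p' := le_antisymm hrp' this
        rw [this, hp'dom] at hr
        exact nomatch hr
    have habove : ∀ r μ, g.h r = some μ → p' ≤ r → ν <+: μ := by
      intro r μ hr hp'r
      exact absurd ⟨hp'A, r, by rw [hr]; exact Option.some_ne_none _, hp'r⟩ hp'bad
    refine ⟨g.extend p' ν ⟨n + 1, hp'A⟩ hbelow habove,
      g.le_extend p' ν ⟨n + 1, hp'A⟩ hp'dom hbelow habove,
      p', g.extend_self p' ν ⟨n + 1, hp'A⟩ hbelow habove, hpp', hp'q⟩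
  constructor
  · -- part (a)
    rintro p ⟨n, hpn⟩ g
    by_cases hp : g.h p = none
    · -- find the value to assign to p
      set S : Set P := {r | g.h r ≠ none ∧ r ≤ p} with hS_def
      have hSfin : S.Finite := g.dom_finite.subset (fun r hr => hr.1)
      have hScomp : ∀ r₁ ∈ S, ∀ r₂ ∈ S, r₁ ≤ r₂ ∨ r₂ ≤ r₁ := by
        rintro r₁ ⟨h1, hl1⟩ r₂ ⟨h2, hl2⟩
        obtain ⟨k₁, hk1⟩ := g.dom_subset r₁ h1
        obtain ⟨k₂, hk2⟩ := g.dom_subset r₂ h2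
        rcases le_total k₁ k₂ with hk | hk
        · exact Or.inl (tree_le' hmax hdown hk hk1 hk2 ⟨p, hl1, hl2⟩)
        · exact Or.inr (tree_le' hmax hdown hk hk2 hk1 ⟨p, hl2, hl1⟩)
      rcases Set.eq_empty_or_nonempty S with hSe | hSne
      · -- assign []
        have hbelow : ∀ r μ, g.h r = some μ → r ≤ p → μ <+: ([] : List Bool) := by
          intro r μ hr hrp
          exact absurd (show r ∈ S from ⟨by rw [hr]; exact Option.some_ne_none _, hrp⟩)
            (hSe ▸ Set.notMem_empty r)
        have habove : ∀ r μ, g.h r = some μ → p ≤ r → ([] : List Bool) <+: μ :=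
          fun r μ _ _ => List.nil_prefix
        refine ⟨g.extend p [] ⟨n, hpn⟩ hbelow habove, ?_,
          g.le_extend p [] ⟨n, hpn⟩ hp hbelow habove⟩
        show (g.extend p [] ⟨n, hpn⟩ hbelow habove).h p ≠ none
        rw [g.extend_self p [] ⟨n, hpn⟩ hbelow habove]
        exact Option.some_ne_none _
      · obtain ⟨r₀, hr₀S, hr₀max⟩ := Set.Finite.exists_maximalFor id S hSfin hSne
        have hr₀top : ∀ r ∈ S, r ≤ r₀ := by
          intro r hr
          rcases hScomp r hr r₀ hr₀S with h | h
          · exact h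
          · exact hr₀max hr h
        obtain ⟨ν₀, hν₀⟩ := Option.ne_none_iff_exists'.mp hr₀S.1
        have hbelow : ∀ r μ, g.h r = some μ → r ≤ p → μ <+: ν₀ := by
          intro r μ hr hrp
          have hrS : r ∈ S := ⟨by rw [hr]; exact Option.some_ne_none _, hrp⟩
          exact g.mono r r₀ μ ν₀ hr hν₀ (hr₀top r hrS)
        have habove : ∀ r μ, g.h r = some μ → p ≤ r → ν₀ <+: μ := by
          intro r μ hr hpr
          exact g.mono r₀ r ν₀ μ hν₀ hr (le_trans hr₀S.2 hpr)
        refine ⟨g.extend p ν₀ ⟨n, hpn⟩ hbelow habove, ?_,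
          g.le_extend p ν₀ ⟨n, hpn⟩ hp hbelow habove⟩
        show (g.extend p ν₀ ⟨n, hpn⟩ hbelow habove).h p ≠ none
        rw [g.extend_self p ν₀ ⟨n, hpn⟩ hbelow habove]
        exact Option.some_ne_none _
    · exact ⟨g, hp, g.le_refl'⟩
  · -- part (b)
    intro q m h₀ g
    by_cases hc : PCompat (CCond.le (P := P) (A := A)) g h₀
    · obtain ⟨g₀, hgg₀, hh₀g₀⟩ := hc
      -- the finite set of tasks
      set T : Set (P × List Bool) := {pv | (∃ ν₀, h₀.h pv.1 = some ν₀ ∧ ν₀ <+: pv.2) ∧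
        (∃ n : ℕ, pv.1 ∈ A n ∧
          {p' ∈ A (n + 1) | pv.1 ≤ p' ∧ PCompat (· ≤ ·) p' q}.Infinite) ∧
        pv.2.length = m} with hT_def
      have hTfin : T.Finite := by
        apply Set.Finite.subset (h₀.dom_finite.prod (List.finite_length_eq Bool m))
        rintro ⟨p, ν⟩ ⟨⟨ν₀, hν₀, _⟩, _, hlen⟩
        exact ⟨by simp [hν₀], hlen⟩
      have main : ∀ l : List (P × List Bool), (∀ pv ∈ l, pv ∈ T) →
          ∀ g₁ : CCond P A, CCond.le h₀ g₁ →
          ∃ g₂, CCond.le g₁ g₂ ∧ ∀ pv ∈ l,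
            ∃ p' : P, g₂.h p' = some pv.2 ∧ pv.1 ≤ p' ∧ PCompat (· ≤ ·) p' q := by
        intro l
        induction l with
        | nil =>
          intro _ g₁ _
          exact ⟨g₁, g₁.le_refl', fun pv hpv => absurd hpv List.not_mem_nil⟩
        | cons a s ih =>
          intro hsub g₁ hg₁
          obtain ⟨g₂, hg₁₂, hall⟩ :=
            ih (fun x hx => hsub x (List.mem_cons_of_mem a hx)) g₁ hg₁
          have haT : a ∈ T := hsub a List.mem_cons_self
          obtain ⟨⟨ν₀, hν₀, hpre⟩, ⟨n, hn, hinf⟩, _⟩ := haT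
          obtain ⟨g₃, hg₂₃, p', hp'val, hp'le, hp'q⟩ :=
            step q h₀ g₂ (CCond.le_trans' hg₁ hg₁₂) a.1 ν₀ a.2 hν₀ hpre n hn hinf
          refine ⟨g₃, CCond.le_trans' hg₁₂ hg₂₃, ?_⟩
          intro pv hpv
          rcases List.mem_cons.mp hpv with rfl | hpv
          · exact ⟨p', hp'val, hp'le, hp'q⟩
          · obtain ⟨p'', h1, h2, h3⟩ := hall pv hpv
            exact ⟨p'', hg₂₃ p'' pv.2 h1, h2, h3⟩
      obtain ⟨g', hle, hall⟩ := main hTfin.toFinset.toList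
        (fun pv hpv => hTfin.mem_toFinset.mp (Finset.mem_toList.mp hpv)) g₀ hh₀g₀
      refine ⟨g', Or.inr ?_, CCond.le_trans' hgg₀ hle⟩
      intro p ν₀ hpν₀ hex ν hlen hpre
      exact hall (p, ν) (Finset.mem_toList.mpr (hTfin.mem_toFinset.mpr
        ⟨⟨ν₀, hpν₀, hpre⟩, hex, hlen⟩))
    · exact ⟨g, Or.inl hc, g.le_refl'⟩
end

section
/- If the cardinality of the continuum is greater than ℵ₁, then there exists a σ-centered forcing notion of cardinality ℵ₁ which cannot be completely embedded into any ccc Souslin forcing notion. -/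
/-- Compatibility of two elements within the set of conditions `Q` of a Souslin forcing:
a common upper bound belonging to `Q` exists. -/
def QCompat (Q : Set (ℕ → ℕ)) (le : (ℕ → ℕ) → (ℕ → ℕ) → Prop) (p q : ℕ → ℕ) : Prop :=
  ∃ r ∈ Q, le p r ∧ le q r

/-- A ccc Souslin forcing notion: the set of conditions is an analytic subset `Q` of Baire
space, the order and incompatibility relations (restricted to `Q`) are analytic subsets of
`ω^ω × ω^ω`, `≤` partially orders `Q`, and every antichain is countable. -/
structure SouslinCCC where
  /-- the set of conditions -/
  Q : Set (ℕ → ℕ)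
  /-- the order relation -/
  le : (ℕ → ℕ) → (ℕ → ℕ) → Prop
  analytic_cond : MeasureTheory.AnalyticSet Q
  analytic_le : MeasureTheory.AnalyticSet
    {x : (ℕ → ℕ) × (ℕ → ℕ) | x.1 ∈ Q ∧ x.2 ∈ Q ∧ le x.1 x.2}
  analytic_incompat : MeasureTheory.AnalyticSet
    {x : (ℕ → ℕ) × (ℕ → ℕ) | x.1 ∈ Q ∧ x.2 ∈ Q ∧ ¬ QCompat Q le x.1 x.2}
  refl : ∀ p ∈ Q, le p p
  trans : ∀ p ∈ Q, ∀ q ∈ Q, ∀ r ∈ Q, le p q → le q r → le p r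
  antisymm : ∀ p ∈ Q, ∀ q ∈ Q, le p q → le q p → p = q
  ccc : ∀ S ⊆ Q, (∀ p ∈ S, ∀ q ∈ S, p ≠ q → ¬ QCompat Q le p q) → S.Countable

/-- A maximal antichain of a Souslin forcing notion. -/
def SouslinCCC.MaxAntichain (T : SouslinCCC) (A : Set (ℕ → ℕ)) : Prop :=
  A ⊆ T.Q ∧ (∀ p ∈ A, ∀ q ∈ A, p ≠ q → ¬ QCompat T.Q T.le p q) ∧
    ∀ p ∈ T.Q, ∃ q ∈ A, QCompat T.Q T.le p q

/-- A complete embedding of a forcing notion `(P, leP)` into a ccc Souslin forcing notion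
`T`: it is order preserving, preserves incompatibility in both directions, and maps maximal
antichains of `P` onto maximal antichains of `T`. -/
def CompleteEmbedding {P : Type} (leP : P → P → Prop) (T : SouslinCCC)
    (e : P → (ℕ → ℕ)) : Prop :=
  (∀ p : P, e p ∈ T.Q) ∧
  (∀ p q : P, leP p q → T.le (e p) (e q)) ∧
  (∀ p q : P, ¬ PCompat leP p q ↔ ¬ QCompat T.Q T.le (e p) (e q)) ∧
  (∀ A : Set P, PMaxAntichain leP A → T.MaxAntichain (e '' A))

/-- A forcing notion is σ-centered if it is the union of countably many centered subsets,
where a subset is centered if each of its finite subsets has a common upper bound. -/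
def PSigmaCentered {P : Type} (le : P → P → Prop) : Prop :=
  ∃ C : ℕ → Set P, (∀ p, ∃ n, p ∈ C n) ∧
    ∀ n, ∀ F : Finset P, ↑F ⊆ C n → ∃ r, ∀ p ∈ F, le p r


noncomputable section

open Classical

/-- Baire space. -/
abbrev NN := ℕ → ℕ

/-- encoding of finite sequences -/
abbrev encL (l : List ℕ) : ℕ := Encodable.encode l

/-- encoding of pairs of finite sequences -/
abbrev encLL (l m : List ℕ) : ℕ := Encodable.encode (l, m)

/-- the first `k` values of `z` as a finite sequence -/
def pre (z : NN) (k : ℕ) : List ℕ := (List.range k).map z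

@[simp] lemma pre_zero (z : NN) : pre z 0 = [] := rfl

@[simp] lemma pre_length (z : NN) (k : ℕ) : (pre z k).length = k := by
  simp [pre]

lemma pre_succ (z : NN) (k : ℕ) : pre z (k + 1) = pre z k ++ [z k] := by
  simp [pre, List.range_succ]

lemma pre_getD (z : NN) {j k : ℕ} (h : j < k) : (pre z k).getD j 0 = z j := by
  rw [List.getD_eq_getElem _ _ (by simpa using h)]
  simp [pre]

lemma pre_take (z : NN) {j k : ℕ} (h : j ≤ k) : (pre z k).take j = pre z j := by
  simp [pre, ← List.map_take, List.take_range, Nat.min_eq_left h]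

lemma pre_prefix (z : NN) {j k : ℕ} (h : j ≤ k) : pre z j <+: pre z k := by
  rw [← pre_take z h]; exact List.take_prefix _ _

lemma pre_inj (z : NN) {j k : ℕ} (h : pre z j = pre z k) : j = k := by
  have := congrArg List.length h; simpa using this

/-- if `p` is a proper prefix of `l` then appending the next entry of `l` still
gives a prefix of `l`. -/
lemma prefix_snoc_getD {p l : List ℕ} (h : p <+: l) (hlen : p.length < l.length) :
    p ++ [l.getD p.length 0] <+: l := by
  obtain ⟨t, rfl⟩ := h
  rcases t with _ | ⟨a, t'⟩
  · simp at hlen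
  · have : (p ++ a :: t').getD p.length 0 = a := by
      rw [List.getD_append_right _ _ _ _ le_rfl]
      simp
    rw [this]
    rw [List.prefix_append_right_inj]
    exact ⟨t', rfl⟩

lemma prefix_getD_eq {p l : List ℕ} (h : p <+: l) {j : ℕ} (hj : j < p.length) :
    l.getD j 0 = p.getD j 0 := by
  obtain ⟨t, rfl⟩ := h
  rw [List.getD_append _ _ _ _ hj]

lemma prefix_antisymm {p l : List ℕ} (h1 : p <+: l) (h2 : l <+: p) : p = l :=
  h1.eq_of_length (le_antisymm h1.length_le h2.length_le)

lemma prefix_length_lt {p l : List ℕ} (h1 : p <+: l) (h2 : p ≠ l) : p.length < l.length :=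
  lt_of_le_of_ne h1.length_le (fun hl => h2 (h1.eq_of_length hl))

/-! ### Trees of finite sequences -/

/-- The tree coded by a point of Baire space. -/
def Tr (y : NN) : Set (List ℕ) := {σ | ∀ τ, τ <+: σ → y (encL τ) = 2}

/-- A set of finite sequences is prefix closed. -/
def TreePC (S : Set (List ℕ)) : Prop := ∀ ⦃σ τ : List ℕ⦄, τ <+: σ → σ ∈ S → τ ∈ S

/-- The tree has an infinite branch. -/
def HasBranch (S : Set (List ℕ)) : Prop := ∃ z : NN, ∀ k, pre z k ∈ S

lemma Tr_pc (y : NN) : TreePC (Tr y) := fun σ τ hts hσ τ' hτ' => hσ τ' (hτ'.trans hts)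

/-- coding a set of sequences as an element of Baire space with values 1 and 2 -/
def encodeTree (S : Set (List ℕ)) : NN := fun m =>
  if (∃ u : List ℕ, Encodable.decode m = some u ∧ u ∈ S) then 2 else 1

lemma encodeTree_ne_zero (S : Set (List ℕ)) (m : ℕ) : encodeTree S m ≠ 0 := by
  unfold encodeTree; split <;> simp

lemma encodeTree_eq_two_iff (S : Set (List ℕ)) (u : List ℕ) :
    encodeTree S (encL u) = 2 ↔ u ∈ S := by
  unfold encodeTree
  by_cases h : ∃ u' : List ℕ, Encodable.decode (encL u) = some u' ∧ u' ∈ S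
  · rw [if_pos h]
    obtain ⟨u', hu', hmem⟩ := h
    rw [Encodable.encodek] at hu'
    injection hu' with h'
    subst h'
    simp [hmem]
  · rw [if_neg h]
    constructor
    · intro h2; exact absurd h2 (by norm_num)
    · intro hmem
      exact absurd ⟨u, Encodable.encodek u, hmem⟩ h

lemma Tr_encodeTree {S : Set (List ℕ)} (hpc : TreePC S) : Tr (encodeTree S) = S := by
  ext σ
  constructor
  · intro h
    exact (encodeTree_eq_two_iff S σ).1 (h σ (List.prefix_refl σ))
  · intro hσ τ hτ
    exact (encodeTree_eq_two_iff S τ).2 (hpc hτ hσ)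

/-- embedding between trees: image preserving and strictly increasing on one-step
extensions -/
def IsEmb (f : List ℕ → List ℕ) (S S' : Set (List ℕ)) : Prop :=
  ∀ σ : List ℕ, (σ ∈ S → f σ ∈ S') ∧
    ∀ k : ℕ, σ ++ [k] ∈ S → (f σ <+: f (σ ++ [k]) ∧ f σ ≠ f (σ ++ [k]))

/-- an embedding pushes branches forward -/
lemma IsEmb.push {f : List ℕ → List ℕ} {S S' : Set (List ℕ)} (hpc : TreePC S')
    (hf : IsEmb f S S') (hb : HasBranch S) : HasBranch S' := by
  obtain ⟨z, hz⟩ := hb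
  -- the chain of images
  have hchain : ∀ k, f (pre z k) <+: f (pre z (k + 1)) ∧ f (pre z k) ≠ f (pre z (k + 1)) := by
    intro k
    have := (hf (pre z k)).2 (z k)
    rw [← pre_succ] at this
    exact this (hz (k + 1))
  have hmono : ∀ j k, j ≤ k → f (pre z j) <+: f (pre z k) := by
    intro j k hjk
    induction k with
    | zero => cases Nat.le_zero.1 hjk; exact List.prefix_refl _
    | succ n ih =>
      rcases Nat.lt_or_ge j (n + 1) with h | h
      · exact (ih (Nat.lt_succ_iff.1 h)).trans (hchain n).1
      · have : j = n + 1 := le_antisymm hjk h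
        subst this; exact List.prefix_refl _
  have hlen : ∀ k, k ≤ (f (pre z k)).length := by
    intro k
    induction k with
    | zero => exact Nat.zero_le _
    | succ n ih =>
      have hlt := prefix_length_lt (hchain n).1 (hchain n).2
      omega
  -- build the branch through S'
  refine ⟨fun j => (f (pre z (j + 1))).getD j 0, fun k => ?_⟩
  have key : ∀ k, pre (fun j => (f (pre z (j + 1))).getD j 0) k <+: f (pre z k) := by
    intro k
    induction k with
    | zero => simp
    | succ n ih =>
      have h1 : pre (fun j => (f (pre z (j + 1))).getD j 0) n <+: f (pre z (n + 1)) :=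
        ih.trans (hchain n).1
      have h2 : n < (f (pre z (n + 1))).length := lt_of_lt_of_le (Nat.lt_succ_self n) (hlen (n+1))
      have h3 := prefix_snoc_getD h1 (by simpa using h2)
      rw [pre_succ]
      simpa using h3
  exact hpc (key k) ((hf (pre z k)).1 (hz k))

/-- child relation in a tree -/
def childR (S : Set (List ℕ)) : List ℕ → List ℕ → Prop :=
  fun τ σ => τ ∈ S ∧ ∃ n : ℕ, τ = σ ++ [n]

lemma childR_wf {S : Set (List ℕ)} (hpc : TreePC S) (hnb : ¬ HasBranch S) :
    WellFounded (childR S) := by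
  by_contra hwf
  have hex : ∃ x, ¬ Acc (childR S) x := by
    by_contra hall
    push_neg at hall
    exact hwf ⟨hall⟩
  obtain ⟨x0, hx0⟩ := hex
  have hstep0 : ∀ x : {a // ¬ Acc (childR S) a}, ∃ y : {a // ¬ Acc (childR S) a},
      childR S y.1 x.1 := by
    rintro ⟨x, hx⟩
    obtain ⟨w, hw⟩ := exists_not_acc_lt_of_not_acc hx
    exact ⟨⟨w, hw.1⟩, hw.2⟩
  choose g hg using hstep0
  set σ : ℕ → List ℕ := fun n => (g^[n] ⟨x0, hx0⟩).1 with hσ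
  have hstep : ∀ n, childR S (σ (n + 1)) (σ n) := by
    intro n
    have : g^[n+1] ⟨x0, hx0⟩ = g (g^[n] ⟨x0, hx0⟩) := by
      rw [Function.iterate_succ']; rfl
    simp only [hσ, this]
    exact hg _
  have hmem : ∀ n, σ (n + 1) ∈ S := fun n => (hstep n).1
  have hpre : ∀ n, σ n <+: σ (n + 1) := by
    intro n; obtain ⟨-, m, hm⟩ := hstep n; rw [hm]; exact ⟨[m], rfl⟩
  have hlen : ∀ n, (σ n).length = (σ 0).length + n := by
    intro n
    induction n with
    | zero => rfl
    | succ m ih =>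
      obtain ⟨-, j, hj⟩ := hstep m
      rw [hj]; simp [ih]; omega
  have hmono : ∀ j k, j ≤ k → σ j <+: σ k := by
    intro j k hjk
    induction k with
    | zero => cases Nat.le_zero.1 hjk; exact List.prefix_refl _
    | succ n ih =>
      rcases Nat.lt_or_ge j (n + 1) with h | h
      · exact (ih (Nat.lt_succ_iff.1 h)).trans (hpre n)
      · have : j = n + 1 := le_antisymm hjk h
        subst this; exact List.prefix_refl _
  apply hnb
  refine ⟨fun j => (σ (j + 1)).getD j 0, fun k => ?_⟩
  have hlenk : ∀ k, k ≤ (σ k).length := by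
    intro k; rw [hlen k]; omega
  have key : ∀ k, pre (fun j => (σ (j + 1)).getD j 0) k <+: σ k := by
    intro k
    induction k with
    | zero => simp
    | succ n ih =>
      have h1 : pre (fun j => (σ (j + 1)).getD j 0) n <+: σ (n + 1) := ih.trans (hpre n)
      have h2 : n < (σ (n + 1)).length := lt_of_lt_of_le (Nat.lt_succ_self n) (hlenk (n + 1))
      have h3 := prefix_snoc_getD h1 (by simpa using h2)
      rw [pre_succ]
      simpa using h3
  exact hpc ((key k).trans (hpre k)) (hmem k)


/-! ### Topology toolkit -/

section Topo

variable {X : Type*} [TopologicalSpace X]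

lemma continuous_discretePre (f : X → ℕ) (h : ∀ n, IsOpen (f ⁻¹' {n})) : Continuous f := by
  rw [continuous_def]
  intro U _
  have : f ⁻¹' U = ⋃ n ∈ U, f ⁻¹' {n} := by
    ext x; simp
  rw [this]
  exact isOpen_biUnion fun n _ => h n

lemma isClopen_coord (i v : ℕ) : IsClopen {w : NN | w i = v} :=
  (isClopen_discrete ({v} : Set ℕ)).preimage (continuous_apply i)

lemma continuous_natComp2 (F : ℕ → ℕ → ℕ) {g1 g2 : X → ℕ} (h1 : Continuous g1)
    (h2 : Continuous g2) : Continuous fun x => F (g1 x) (g2 x) := by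
  apply continuous_discretePre
  intro n
  have : (fun x => F (g1 x) (g2 x)) ⁻¹' {n} =
      ⋃ ab : ℕ × ℕ, ({x | g1 x = ab.1} ∩ {x | g2 x = ab.2} ∩ {x | F ab.1 ab.2 = n}) := by
    ext x
    simp only [Set.mem_preimage, Set.mem_singleton_iff, Set.mem_iUnion, Set.mem_inter_iff,
      Set.mem_setOf_eq]
    constructor
    · intro hx; exact ⟨(g1 x, g2 x), ⟨rfl, rfl⟩, hx⟩
    · rintro ⟨ab, ⟨ha, hb⟩, hF⟩; rw [ha, hb]; exact hF
  rw [this]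
  apply isOpen_iUnion
  intro ab
  by_cases hF : F ab.1 ab.2 = n
  · have : {x : X | F ab.1 ab.2 = n} = Set.univ := by simp [hF]
    rw [this]
    exact ((((isClopen_discrete ({ab.1} : Set ℕ)).preimage h1).isOpen).inter
      (((isClopen_discrete ({ab.2} : Set ℕ)).preimage h2).isOpen)).inter isOpen_univ
  · have : {x : X | F ab.1 ab.2 = n} = ∅ := by simp [hF]
    rw [this]
    simp
lemma continuous_natComp1 (F : ℕ → ℕ) {g : X → ℕ} (hg : Continuous g) :
    Continuous fun x => F (g x) :=
  continuous_natComp2 (fun a _ => F a) hg hg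

lemma continuous_evalNN {u : X → NN} (hu : Continuous u) {g : X → ℕ} (hg : Continuous g) :
    Continuous fun x => u x (g x) := by
  apply continuous_discretePre
  intro n
  have : (fun x => u x (g x)) ⁻¹' {n} = ⋃ m : ℕ, ({x | g x = m} ∩ {x | u x m = n}) := by
    ext x
    simp only [Set.mem_preimage, Set.mem_singleton_iff, Set.mem_iUnion, Set.mem_inter_iff,
      Set.mem_setOf_eq]
    constructor
    · intro hx; exact ⟨g x, rfl, hx⟩
    · rintro ⟨m, hm, hx⟩; rw [hm]; exact hx
  rw [this]
  apply isOpen_iUnion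
  intro m
  exact (((isClopen_discrete ({m} : Set ℕ)).preimage hg).isOpen).inter
    (((isClopen_discrete ({n} : Set ℕ)).preimage ((continuous_apply m).comp hu)).isOpen)

lemma pre_eq_coords {w p : NN} {k : ℕ} (h : pre w k = pre p k) {j : ℕ} (hj : j < k) :
    w j = p j := by
  have h1 := pre_getD w hj
  have h2 := pre_getD p hj
  rw [← h1, ← h2, h]

lemma isClopen_preEq (k : ℕ) (τ : List ℕ) : IsClopen {w : NN | pre w k = τ} := by
  by_cases hlen : τ.length = k
  · have : {w : NN | pre w k = τ} = ⋂ j ∈ Finset.range k, {w : NN | w j = τ.getD j 0} := by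
      ext w
      simp only [Set.mem_setOf_eq, Set.mem_iInter, Finset.mem_range]
      constructor
      · intro hw j hj
        rw [← hw, pre_getD w hj]
      · intro hw
        apply List.ext_getElem (by simp [hlen])
        intro j hj1 hj2
        have hjk : j < k := by simpa using hj1
        have e1 : (pre w k)[j]'hj1 = w j := by simp [pre]
        rw [e1, hw j hjk]
        exact List.getD_eq_getElem τ 0 hj2
    rw [this]
    exact isClopen_biInter_finset fun j _ => isClopen_coord j (τ.getD j 0)
  · have : {w : NN | pre w k = τ} = ∅ := by
      ext w
      simp only [Set.mem_setOf_eq, Set.mem_empty_iff_false, iff_false]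
      intro hw
      apply hlen
      rw [← hw]; simp
    rw [this]; exact isClopen_empty

lemma continuous_encPre (k : ℕ) : Continuous fun w : NN => encL (pre w k) := by
  apply continuous_discretePre
  intro m
  by_cases h : ∃ τ : List ℕ, encL τ = m
  · obtain ⟨τ, rfl⟩ := h
    have : (fun w : NN => encL (pre w k)) ⁻¹' {encL τ} = {w : NN | pre w k = τ} := by
      ext w
      simp only [Set.mem_preimage, Set.mem_singleton_iff, Set.mem_setOf_eq]
      exact ⟨fun hw => Encodable.encode_injective hw, fun hw => by rw [hw]⟩
    rw [this]
    exact (isClopen_preEq k τ).isOpen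
  · have : (fun w : NN => encL (pre w k)) ⁻¹' {m} = ∅ := by
      ext w
      simp only [Set.mem_preimage, Set.mem_singleton_iff, Set.mem_empty_iff_false, iff_false]
      intro hw
      exact h ⟨pre w k, hw⟩
    rw [this]; simp

end Topo
/-! ### Sets with closed witnesses ("analytic" sets), universality, and the diagonal -/

/-- a set admitting a closed witness relation (this is just analyticity, in a
self-contained formulation) -/
def AnW {α : Type*} [TopologicalSpace α] (A : Set α) : Prop :=
  ∃ C : Set (α × NN), IsClosed C ∧ ∀ x, x ∈ A ↔ ∃ w : NN, (x, w) ∈ C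

lemma AnW_of_analytic {α : Type*} [TopologicalSpace α] [T2Space α] {A : Set α}
    (h : MeasureTheory.AnalyticSet A) : AnW A := by
  rw [MeasureTheory.AnalyticSet] at h
  rcases h with h | ⟨f, hf, hA⟩
  · refine ⟨∅, isClosed_empty, ?_⟩
    intro x; simp [h]
  · refine ⟨{p : α × NN | f p.2 = p.1}, isClosed_eq (hf.comp continuous_snd) continuous_fst, ?_⟩
    intro x
    rw [← hA]
    constructor
    · rintro ⟨w, rfl⟩; exact ⟨w, rfl⟩
    · rintro ⟨w, hw⟩; exact ⟨w, hw⟩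

lemma cyl_basis {U : Set (NN × NN)} (hU : IsOpen U) {p : NN × NN} (hp : p ∈ U) :
    ∃ k, ∀ q : NN × NN, pre q.1 k = pre p.1 k → pre q.2 k = pre p.2 k → q ∈ U := by
  obtain ⟨u1, u2, hu1, hu2, hp1, hp2, hsub⟩ := isOpen_prod_iff.1 hU p.1 p.2 hp
  obtain ⟨I1, t1, h1, hsub1⟩ := (isOpen_pi_iff.1 hu1) p.1 hp1
  obtain ⟨I2, t2, h2, hsub2⟩ := (isOpen_pi_iff.1 hu2) p.2 hp2
  refine ⟨max (I1.sup id + 1) (I2.sup id + 1), fun q hq1 hq2 => ?_⟩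
  apply hsub
  refine ⟨hsub1 ?_, hsub2 ?_⟩
  · rw [Set.mem_pi]
    intro i hi
    have hi' : i ∈ I1 := Finset.mem_coe.1 hi
    have hik : i < max (I1.sup id + 1) (I2.sup id + 1) :=
      lt_of_lt_of_le (Nat.lt_succ_of_le (Finset.le_sup (f := id) hi')) (le_max_left _ _)
    rw [pre_eq_coords hq1 hik]
    exact (h1 i hi').2
  · rw [Set.mem_pi]
    intro i hi
    have hi' : i ∈ I2 := Finset.mem_coe.1 hi
    have hik : i < max (I1.sup id + 1) (I2.sup id + 1) :=
      lt_of_lt_of_le (Nat.lt_succ_of_le (Finset.le_sup (f := id) hi')) (le_max_right _ _)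
    rw [pre_eq_coords hq2 hik]
    exact (h2 i hi').2

/-- the section of the universal analytic set coded by `c` -/
def Usec (c : NN) : Set NN := {y | ∃ z : NN, ∀ k, c (encLL (pre y k) (pre z k)) = 1}

/-- the code of a closed set -/
def codeOf (C : Set (NN × NN)) : NN := fun m =>
  if (∃ uv : List ℕ × List ℕ, Encodable.decode m = some uv ∧
      ∃ p ∈ C, pre p.1 uv.1.length = uv.1 ∧ pre p.2 uv.2.length = uv.2) then 1 else 0

lemma Usec_codeOf {C : Set (NN × NN)} (hC : IsClosed C) (y : NN) :
    y ∈ Usec (codeOf C) ↔ ∃ w : NN, (y, w) ∈ C := by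
  constructor
  · rintro ⟨z, hz⟩
    refine ⟨z, ?_⟩
    by_contra hyz
    obtain ⟨k, hk⟩ := cyl_basis hC.isOpen_compl hyz
    have h1 := hz k
    rw [codeOf] at h1
    by_cases hcase : (∃ uv : List ℕ × List ℕ,
        Encodable.decode (encLL (pre y k) (pre z k)) = some uv ∧
        ∃ p ∈ C, pre p.1 uv.1.length = uv.1 ∧ pre p.2 uv.2.length = uv.2)
    · obtain ⟨uv, hdec, p, hpC, hpa, hpb⟩ := hcase
      rw [Encodable.encodek] at hdec
      injection hdec with hdec
      subst hdec
      simp only [pre_length] at hpa hpb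
      exact (hk p hpa hpb) hpC
    · rw [if_neg hcase] at h1
      exact absurd h1 (by norm_num)
  · rintro ⟨w, hw⟩
    refine ⟨w, fun k => ?_⟩
    rw [codeOf, if_pos]
    refine ⟨(pre y k, pre w k), Encodable.encodek _, ⟨(y, w), hw, ?_, ?_⟩⟩ <;> simp

lemma exists_code_of_AnW {A : Set NN} (h : AnW A) : ∃ c : NN, A = Usec c := by
  obtain ⟨C, hC, hiff⟩ := h
  refine ⟨codeOf C, ?_⟩
  ext y
  rw [hiff y, Usec_codeOf hC y]

/-- the diagonal set -/
def Delta : Set NN := {c | ∃ z : NN, ∀ k, c (encLL (pre c k) (pre z k)) = 1}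

lemma mem_Usec_self (c : NN) : c ∈ Usec c ↔ c ∈ Delta := Iff.rfl

lemma AnW_Delta : AnW Delta := by
  refine ⟨⋂ k, {p : NN × NN | p.1 (encLL (pre p.1 k) (pre p.2 k)) = 1}, ?_, ?_⟩
  · apply isClosed_iInter
    intro k
    have hidx : Continuous fun p : NN × NN => encLL (pre p.1 k) (pre p.2 k) := by
      have heq : (fun p : NN × NN => encLL (pre p.1 k) (pre p.2 k)) =
          fun p : NN × NN =>
            (fun a b : ℕ => Encodable.encode
              (((Encodable.decode a : Option (List ℕ)).getD []),
               ((Encodable.decode b : Option (List ℕ)).getD [])))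
            (encL (pre p.1 k)) (encL (pre p.2 k)) := by
        funext p
        simp [encLL, Encodable.encodek]
      rw [heq]
      have hg1 : Continuous fun p : NN × NN => encL (pre p.1 k) :=
        (continuous_encPre k).comp continuous_fst
      have hg2 : Continuous fun p : NN × NN => encL (pre p.2 k) :=
        (continuous_encPre k).comp continuous_snd
      exact continuous_natComp2 (fun a b : ℕ => Encodable.encode
        (((Encodable.decode a : Option (List ℕ)).getD []),
         ((Encodable.decode b : Option (List ℕ)).getD []))) hg1 hg2
    have hφ : Continuous fun p : NN × NN => p.1 (encLL (pre p.1 k) (pre p.2 k)) :=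
      continuous_evalNN (continuous_fst) hidx
    have : {p : NN × NN | p.1 (encLL (pre p.1 k) (pre p.2 k)) = 1} =
        (fun p : NN × NN => p.1 (encLL (pre p.1 k) (pre p.2 k))) ⁻¹' {1} := rfl
    rw [this]
    exact ((isClopen_discrete ({1} : Set ℕ)).preimage hφ).isClosed
  · intro c
    constructor
    · rintro ⟨z, hz⟩
      exact ⟨z, Set.mem_iInter.2 fun k => hz k⟩
    · rintro ⟨w, hw⟩
      exact ⟨w, fun k => Set.mem_iInter.1 hw k⟩

/-- the tree of attempts to verify `c ∈ Delta` -/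
def hatT (c : NN) : Set (List ℕ) := {u | ∀ k ≤ u.length, c (encLL (pre c k) (u.take k)) = 1}

lemma hatT_pc (c : NN) : TreePC (hatT c) := by
  intro σ τ hts hσ k hk
  obtain ⟨t, rfl⟩ := hts
  have h2 := hσ k (le_trans hk (by simp))
  rwa [List.take_append_of_le_length hk] at h2

lemma hatT_branch_iff (c : NN) : HasBranch (hatT c) ↔ c ∈ Delta := by
  constructor
  · rintro ⟨z, hz⟩
    refine ⟨z, fun k => ?_⟩
    have := hz k k (by simp)
    rwa [pre_take z (le_refl k)] at this
  · rintro ⟨z, hz⟩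
    refine ⟨z, fun K k hk => ?_⟩
    rw [pre_length] at hk
    rw [pre_take z hk]
    exact hz k

/-- the reduction map -/
def ghat (c : NN) : NN := encodeTree (hatT c)

lemma Tr_ghat (c : NN) : Tr (ghat c) = hatT c := Tr_encodeTree (hatT_pc c)

lemma isClopen_mem_hatT (u : List ℕ) : IsClopen {c : NN | u ∈ hatT c} := by
  have : {c : NN | u ∈ hatT c} =
      ⋂ k ∈ Finset.range (u.length + 1), {c : NN | c (encLL (pre c k) (u.take k)) = 1} := by
    ext c
    simp only [Set.mem_setOf_eq, Set.mem_iInter, Finset.mem_range, Nat.lt_succ_iff]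
    exact ⟨fun h k hk => h k hk, fun h k hk => h k hk⟩
  rw [this]
  apply isClopen_biInter_finset
  intro k _
  have hidx : Continuous fun c : NN => encLL (pre c k) (u.take k) := by
    have heq : (fun c : NN => encLL (pre c k) (u.take k)) =
        fun c : NN =>
          (fun a : ℕ => Encodable.encode
            (((Encodable.decode a : Option (List ℕ)).getD []), u.take k))
          (encL (pre c k)) := by
      funext c
      simp [encLL, Encodable.encodek]
    rw [heq]
    exact continuous_natComp1 (fun a : ℕ => Encodable.encode
      (((Encodable.decode a : Option (List ℕ)).getD []), u.take k)) (continuous_encPre k)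
  have hφ : Continuous fun c : NN => c (encLL (pre c k) (u.take k)) :=
    continuous_evalNN continuous_id hidx
  exact (isClopen_discrete ({1} : Set ℕ)).preimage hφ

lemma continuous_ghat : Continuous ghat := by
  apply continuous_pi
  intro m
  by_cases hm : ∃ u : List ℕ, (Encodable.decode m : Option (List ℕ)) = some u
  · obtain ⟨u, hu⟩ := hm
    have heq : (fun c : NN => ghat c m) = fun c : NN => if u ∈ hatT c then 2 else 1 := by
      funext c
      show encodeTree (hatT c) m = _
      unfold encodeTree
      by_cases hc : u ∈ hatT c
      · rw [if_pos ⟨u, hu, hc⟩, if_pos hc]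
      · rw [if_neg ?_, if_neg hc]
        rintro ⟨u', hu', hc'⟩
        rw [hu] at hu'
        injection hu' with h'
        exact hc (h' ▸ hc')
    rw [heq]
    apply continuous_discretePre
    intro n
    by_cases h2 : n = 2
    · subst h2
      have : (fun c : NN => if u ∈ hatT c then 2 else 1) ⁻¹' {2} = {c : NN | u ∈ hatT c} := by
        ext c
        by_cases hc : u ∈ hatT c <;> simp [hc]
      rw [this]
      exact (isClopen_mem_hatT u).isOpen
    · by_cases h1 : n = 1
      · subst h1
        have : (fun c : NN => if u ∈ hatT c then 2 else 1) ⁻¹' {1} = {c : NN | u ∈ hatT c}ᶜ := by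
          ext c
          by_cases hc : u ∈ hatT c <;> simp [hc]
        rw [this]
        exact (isClopen_mem_hatT u).compl.isOpen
      · have : (fun c : NN => if u ∈ hatT c then 2 else 1) ⁻¹' {n} = ∅ := by
          ext c
          by_cases hc : u ∈ hatT c <;> simp [hc, h1, h2, Ne.symm]
        rw [this]
        simp
  · have heq : (fun c : NN => ghat c m) = fun _ : NN => 1 := by
      funext c
      show encodeTree (hatT c) m = 1
      unfold encodeTree
      rw [if_neg]
      rintro ⟨u', hu', -⟩
      exact hm ⟨u', hu'⟩
    rw [heq]
    exact continuous_const

/-- The master diagonal lemma: no analytic set can consist exactly of the codes of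
wellfounded trees. -/
lemma master {E : Set NN} (hAn : AnW E) (hchar : ∀ y, y ∈ E ↔ ¬ HasBranch (Tr y)) : False := by
  obtain ⟨CE, hCEc, hCEiff⟩ := hAn
  have h1 : AnW Deltaᶜ := by
    refine ⟨{p : NN × NN | (ghat p.1, p.2) ∈ CE}, ?_, ?_⟩
    · have : {p : NN × NN | (ghat p.1, p.2) ∈ CE} =
          (fun p : NN × NN => (ghat p.1, p.2)) ⁻¹' CE := rfl
      rw [this]
      exact hCEc.preimage ((continuous_ghat.comp continuous_fst).prodMk continuous_snd)
    · intro c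
      have : c ∈ Deltaᶜ ↔ ghat c ∈ E := by
        rw [Set.mem_compl_iff, hchar (ghat c), Tr_ghat c, hatT_branch_iff c]
      rw [this, hCEiff (ghat c)]
      rfl
  obtain ⟨c0, hc0⟩ := exists_code_of_AnW h1
  by_cases h : c0 ∈ Delta
  · have : c0 ∈ Usec c0 := (mem_Usec_self c0).2 h
    rw [← hc0] at this
    exact this h
  · have : c0 ∈ Deltaᶜ := h
    rw [hc0] at this
    exact h ((mem_Usec_self c0).1 this)

/-! ### An ℵ₁-indexed cofinal family of wellfounded trees -/

abbrev II : Type := (Cardinal.aleph 1).ord.ToType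

lemma aleph1_ord_ne_zero : (Cardinal.aleph 1).ord ≠ 0 := by
  intro h
  have h2 := Cardinal.card_ord (Cardinal.aleph 1)
  rw [h] at h2
  simp only [Ordinal.card_zero] at h2
  have : (0 : Cardinal) < Cardinal.aleph 1 :=
    lt_of_le_of_lt zero_le Cardinal.aleph0_lt_aleph_one
  rw [← h2] at this
  exact lt_irrefl _ this

instance : Nonempty II := Ordinal.toType_nonempty_iff_ne_zero.2 aleph1_ord_ne_zero

noncomputable instance : IsWellOrder II ((· < ·) : II → II → Prop) := isWellOrder_lt

lemma countable_Iio_II (i : II) : Countable (Set.Iio i) := by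
  have h1 : Cardinal.mk (Set.Iio i) < Cardinal.aleph 1 := Cardinal.mk_Iio_ord_toType i
  have h2 : (Set.Iio i).Countable := (Cardinal.countable_iff_lt_aleph_one _).2 h1
  exact h2.to_subtype

/-- enumeration of the predecessors of `i` -/
noncomputable def belowFun (i : II) : ℕ → II :=
  if h : Nonempty (Set.Iio i) then
    haveI := countable_Iio_II i
    fun n => ((exists_surjective_nat (Set.Iio i)).choose n).1
  else fun _ => i

lemma belowFun_lt {i : II} (h : Nonempty (Set.Iio i)) (n : ℕ) : belowFun i n < i := by
  haveI := countable_Iio_II i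
  rw [belowFun, dif_pos h]
  exact ((exists_surjective_nat (Set.Iio i)).choose n).2

lemma belowFun_surj {i j : II} (hj : j < i) : ∃ n, belowFun i n = j := by
  have h : Nonempty (Set.Iio i) := ⟨⟨j, hj⟩⟩
  haveI := countable_Iio_II i
  obtain ⟨n, hn⟩ := (exists_surjective_nat (Set.Iio i)).choose_spec ⟨j, hj⟩
  refine ⟨n, ?_⟩
  rw [belowFun, dif_pos h]
  exact congrArg Subtype.val hn

/-- the recursively defined family of wellfounded trees -/
noncomputable def Sfam : II → Set (List ℕ) :=
  (IsWellFounded.wf (r := ((· < ·) : II → II → Prop))).fix fun i IH =>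
    if h : Nonempty (Set.Iio i) then
      {[]} ∪ {l : List ℕ | ∃ (n : ℕ) (l' : List ℕ), l = n :: l' ∧
        l' ∈ IH (belowFun i n) (belowFun_lt h n)}
    else {[]}

lemma Sfam_eq (i : II) : Sfam i =
    if Nonempty (Set.Iio i) then
      {[]} ∪ {l : List ℕ | ∃ (n : ℕ) (l' : List ℕ), l = n :: l' ∧
        l' ∈ Sfam (belowFun i n)}
    else {[]} := by
  rw [Sfam, WellFounded.fix_eq]
  rfl

lemma nil_mem_Sfam (i : II) : [] ∈ Sfam i := by
  rw [Sfam_eq]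
  split
  · exact Or.inl rfl
  · exact rfl

lemma cons_mem_Sfam {i : II} (h : Nonempty (Set.Iio i)) (n : ℕ) (l' : List ℕ) :
    n :: l' ∈ Sfam i ↔ l' ∈ Sfam (belowFun i n) := by
  rw [Sfam_eq, if_pos h]
  constructor
  · rintro (h1 | ⟨n', l'', heq, hmem⟩)
    · exact absurd h1 (by simp)
    · injection heq with e1 e2
      subst e1; subst e2
      exact hmem
  · intro hmem
    exact Or.inr ⟨n, l', rfl, hmem⟩

lemma cons_not_mem_Sfam {i : II} (h : ¬ Nonempty (Set.Iio i)) (n : ℕ) (l' : List ℕ) :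
    n :: l' ∉ Sfam i := by
  rw [Sfam_eq, if_neg h]
  simp

lemma Sfam_pc (i : II) : TreePC (Sfam i) := by
  induction i using ((IsWellFounded.wf (r := ((· < ·) : II → II → Prop)))).induction with
  | _ i IH =>
    intro σ τ hpre hσ
    rcases σ with _ | ⟨n, σ'⟩
    · rw [List.prefix_nil] at hpre
      subst hpre
      exact nil_mem_Sfam i
    · rcases τ with _ | ⟨m, τ'⟩
      · exact nil_mem_Sfam i
      · rw [List.cons_prefix_cons] at hpre
        obtain ⟨rfl, hpre'⟩ := hpre
        by_cases h : Nonempty (Set.Iio i)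
        · rw [cons_mem_Sfam h] at hσ ⊢
          exact IH _ (belowFun_lt h _) hpre' hσ
        · exact absurd hσ (cons_not_mem_Sfam h _ σ')

lemma pre_shift (z : NN) (k : ℕ) : pre z (k + 1) = z 0 :: pre (fun j => z (j + 1)) k := by
  induction k with
  | zero => simp [pre, List.range_succ]
  | succ m ih =>
    rw [pre_succ, ih, pre_succ]
    simp

lemma Sfam_nb (i : II) : ¬ HasBranch (Sfam i) := by
  induction i using ((IsWellFounded.wf (r := ((· < ·) : II → II → Prop)))).induction with
  | _ i IH =>
    rintro ⟨z, hz⟩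
    have h1 : [z 0] ∈ Sfam i := by
      have := hz 1
      rw [pre_shift] at this
      simpa using this
    have hne : Nonempty (Set.Iio i) := by
      by_contra h
      exact cons_not_mem_Sfam h (z 0) [] h1
    apply IH (belowFun i (z 0)) (belowFun_lt hne (z 0))
    refine ⟨fun j => z (j + 1), fun k => ?_⟩
    have := hz (k + 1)
    rw [pre_shift] at this
    rw [cons_mem_Sfam hne] at this
    exact this

lemma exists_ub_II (g : ℕ → II) : ∃ i : II, ∀ n, g n < i := by
  have ho : Ordinal.lsub (fun n => Ordinal.typein ((· < ·) : II → II → Prop) (g n)) <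
      (Cardinal.aleph 1).ord := by
    apply Ordinal.lsub_lt_ord
    · rw [Cardinal.isRegular_aleph_one.cof_eq]
      simpa using Cardinal.aleph0_lt_aleph_one
    · intro n
      exact Ordinal.typein_lt_self (g n)
  refine ⟨Ordinal.enum ((· < ·) : II → II → Prop)
    ⟨Ordinal.lsub (fun n => Ordinal.typein ((· < ·) : II → II → Prop) (g n)), ?_⟩, ?_⟩
  · rw [Ordinal.type_toType]
    exact ho
  · intro n
    have h1 : Ordinal.typein ((· < ·) : II → II → Prop) (g n) <
        Ordinal.lsub (fun n => Ordinal.typein ((· < ·) : II → II → Prop) (g n)) :=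
      Ordinal.lt_lsub _ n
    have h2 := Ordinal.typein_enum ((· < ·) : II → II → Prop)
      (o := Ordinal.lsub (fun n => Ordinal.typein ((· < ·) : II → II → Prop) (g n)))
      (by rw [Ordinal.type_toType]; exact ho)
    exact (Ordinal.typein_lt_typein ((· < ·) : II → II → Prop)).1 (by rw [h2]; exact h1)

/-- the family of codes -/
noncomputable def xfam (i : II) : NN := encodeTree (Sfam i)

lemma Tr_xfam (i : II) : Tr (xfam i) = Sfam i := Tr_encodeTree (Sfam_pc i)

lemma xfam_ne_zero (i : II) (m : ℕ) : xfam i m ≠ 0 := encodeTree_ne_zero _ m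

/-- every wellfounded prefix-closed tree embeds into a member of the family -/
lemma exists_emb {S : Set (List ℕ)} (hpc : TreePC S) (hnb : ¬ HasBranch S) :
    ∃ (i : II) (f : List ℕ → List ℕ), IsEmb f S (Sfam i) := by
  have hwf := childR_wf hpc hnb
  have main : ∀ σ : List ℕ, ∃ (i : II) (f : List ℕ → List ℕ),
      IsEmb f {l : List ℕ | σ ++ l ∈ S} (Sfam i) := by
    intro σ
    induction σ using hwf.induction with
    | _ σ IH =>
      have hch : ∀ n : ℕ, ∃ (i : II) (f : List ℕ → List ℕ),
          IsEmb f {l : List ℕ | (σ ++ [n]) ++ l ∈ S} (Sfam i) := by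
        intro n
        by_cases hσn : σ ++ [n] ∈ S
        · exact IH (σ ++ [n]) ⟨hσn, n, rfl⟩
        · refine ⟨Classical.arbitrary II, fun _ => [], fun l => ⟨fun hl => ?_, fun k hk => ?_⟩⟩
          · exact absurd (hpc (List.prefix_append _ _) hl) hσn
          · exact absurd (hpc (List.prefix_append _ _) hk) hσn
      choose gi gf hgf using hch
      obtain ⟨i, hi⟩ := exists_ub_II gi
      have hne : Nonempty (Set.Iio i) := ⟨⟨gi 0, hi 0⟩⟩
      have hhead : ∀ n, ∃ m, belowFun i m = gi n := fun n => belowFun_surj (hi n)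
      choose mh hmh using hhead
      refine ⟨i, fun l => match l with
        | [] => []
        | n :: l' => mh n :: gf n l', fun l => ⟨?_, ?_⟩⟩
      · intro hl
        match l with
        | [] => exact nil_mem_Sfam i
        | n :: l' =>
          have hl' : l' ∈ {l : List ℕ | (σ ++ [n]) ++ l ∈ S} := by
            show (σ ++ [n]) ++ l' ∈ S
            rw [List.append_assoc]
            exact hl
          have hmem := (hgf n l').1 hl'
          show mh n :: gf n l' ∈ Sfam i
          rw [cons_mem_Sfam hne, hmh n]
          exact hmem
      · intro k hk
        match l with
        | [] =>
          constructor
          · show ([] : List ℕ) <+: mh k :: gf k []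
            exact List.nil_prefix
          · show ([] : List ℕ) ≠ mh k :: gf k []
            simp
        | n :: l' =>
          have hk' : l' ++ [k] ∈ {l : List ℕ | (σ ++ [n]) ++ l ∈ S} := by
            show (σ ++ [n]) ++ (l' ++ [k]) ∈ S
            rw [List.append_assoc]
            simpa using hk
          have h2 := (hgf n l').2 k hk'
          constructor
          · show mh n :: gf n l' <+: mh n :: gf n (l' ++ [k])
            rw [List.cons_prefix_cons]
            exact ⟨rfl, h2.1⟩
          · show mh n :: gf n l' ≠ mh n :: gf n (l' ++ [k])
            intro hcontra
            injection hcontra with e1 e2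
            exact h2.2 e2
  obtain ⟨i, f, hf⟩ := main []
  exact ⟨i, f, hf⟩

/-! ### The σ-centered forcing notion -/

abbrev PP : Type := List ℕ × Finset II

/-- the order on the forcing notion: extend the stem, grow the side conditions,
and new stem entries avoid the values of the committed functions -/
def leP : PP → PP → Prop := fun p q =>
  p.1 <+: q.1 ∧ p.2 ⊆ q.2 ∧
    ∀ j : ℕ, p.1.length ≤ j → j < q.1.length → ∀ i ∈ p.2, q.1.getD j 0 ≠ xfam i j

lemma leP_refl (p : PP) : leP p p := by
  refine ⟨List.prefix_refl _, subset_rfl, ?_⟩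
  intro j h1 h2 i _
  omega

lemma leP_trans {p q r : PP} (h1 : leP p q) (h2 : leP q r) : leP p r := by
  obtain ⟨hp1, hs1, ha1⟩ := h1
  obtain ⟨hp2, hs2, ha2⟩ := h2
  refine ⟨hp1.trans hp2, hs1.trans hs2, ?_⟩
  intro j hj1 hj2 i hi
  by_cases hcase : j < q.1.length
  · rw [prefix_getD_eq hp2 hcase]
    exact ha1 j hj1 hcase i hi
  · exact ha2 j (le_of_not_gt hcase) hj2 i (hs1 hi)

lemma leP_antisymm {p q : PP} (h1 : leP p q) (h2 : leP q p) : p = q :=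
  Prod.ext (prefix_antisymm h1.1 h2.1) (Finset.Subset.antisymm h1.2.1 h2.2.1)

lemma leP_sigma_centered :
    ∃ C : ℕ → Set PP, (∀ p, ∃ n, p ∈ C n) ∧
      ∀ n, ∀ F : Finset PP, ↑F ⊆ C n → ∃ r, ∀ p ∈ F, leP p r := by
  refine ⟨fun n => {p : PP | encL p.1 = n}, fun p => ⟨encL p.1, rfl⟩, ?_⟩
  intro n F hF
  by_cases hne : F.Nonempty
  · obtain ⟨p0, hp0⟩ := hne
    refine ⟨(p0.1, F.sup Prod.snd), ?_⟩
    intro p hp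
    have hstem : p.1 = p0.1 :=
      Encodable.encode_injective ((hF hp).trans (hF hp0).symm)
    refine ⟨by rw [hstem], Finset.le_sup (f := Prod.snd) hp, ?_⟩
    intro j h1 h2 i _
    rw [hstem] at h1
    have h2' : j < p0.1.length := h2
    omega
  · rw [Finset.not_nonempty_iff_eq_empty] at hne
    subst hne
    exact ⟨([], ∅), by simp⟩

lemma mk_PP : Cardinal.mk PP = Cardinal.aleph 1 := by
  have h1 : Cardinal.mk II = Cardinal.aleph 1 := by
    rw [Cardinal.mk_toType, Cardinal.card_ord]
  haveI hinf : Infinite II := by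
    rw [Cardinal.infinite_iff, h1]
    exact Cardinal.aleph0_le_aleph 1
  have h2 : Cardinal.mk (Finset II) = Cardinal.aleph 1 := by
    rw [Cardinal.mk_finset_of_infinite, h1]
  have h3 : Cardinal.mk (List ℕ) = Cardinal.aleph0 := Cardinal.mk_list_eq_aleph0 ℕ
  have h4 : Cardinal.mk PP = Cardinal.mk (List ℕ) * Cardinal.mk (Finset II) := by
    rw [Cardinal.mk_prod, Cardinal.lift_id, Cardinal.lift_id]
  rw [h4, h2, h3, Cardinal.mul_eq_max le_rfl (Cardinal.aleph0_le_aleph 1)]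
  exact max_eq_right (le_of_lt Cardinal.aleph0_lt_aleph_one)

/-- a maximal antichain inside a dense set -/
lemma exists_max_antichain {D : Set PP} (hD : ∀ p : PP, ∃ q : PP, leP p q ∧ q ∈ D) :
    ∃ A : Set PP, A ⊆ D ∧ PMaxAntichain leP A := by
  obtain ⟨M, hMmax⟩ := zorn_subset {A : Set PP | A ⊆ D ∧ PAntichain leP A} (by
    intro c hc hchain
    refine ⟨⋃₀ c, ⟨?_, ?_⟩, fun s hs => Set.subset_sUnion_of_mem hs⟩
    · intro x hx
      obtain ⟨s, hs, hxs⟩ := hx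
      exact (hc hs).1 hxs
    · intro p hp q hq hne
      obtain ⟨s1, hs1, hp1⟩ := hp
      obtain ⟨s2, hs2, hq2⟩ := hq
      rcases hchain.total hs1 hs2 with h | h
      · exact (hc hs2).2 p (h hp1) q hq2 hne
      · exact (hc hs1).2 p hp1 q (h hq2) hne)
  have hM : M ⊆ D ∧ PAntichain leP M := hMmax.prop
  refine ⟨M, hM.1, hM.2, ?_⟩
  intro p
  obtain ⟨d, hpd, hdD⟩ := hD p
  by_cases hdM : d ∈ M
  · exact ⟨d, hdM, ⟨d, hpd, leP_refl d⟩⟩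
  · by_contra hno
    push_neg at hno
    have hanti : PAntichain leP (M ∪ {d}) := by
      intro a ha b hb hne
      rcases ha with ha | ha
      · rcases hb with hb | hb
        · exact hM.2 a ha b hb hne
        · rcases hb
          rintro ⟨r, har, hbr⟩
          exact hno a ha ⟨r, leP_trans hpd hbr, har⟩
      · rcases ha
        rcases hb with hb | hb
        · rintro ⟨r, har, hbr⟩
          exact hno b hb ⟨r, leP_trans hpd har, hbr⟩
        · rcases hb
          exact absurd rfl hne
    have hmem : M ∪ {d} ∈ {A : Set PP | A ⊆ D ∧ PAntichain leP A} :=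
      ⟨Set.union_subset hM.1 (by simpa using hdD), hanti⟩
    have hsub : M ∪ {d} ⊆ M := hMmax.le_of_ge hmem Set.subset_union_left
    exact hdM (hsub (Or.inr rfl))

/-! ### The pattern sets relative to a Souslin forcing -/

/-- the basic test conditions -/
def ps (s : List ℕ) : PP := (s, ∅)

/-- `s` avoids the values of `y` -/
def Avoid (s : List ℕ) (y : NN) : Prop := ∀ j, j < s.length → s.getD j 0 ≠ y j

lemma leP_ps {s' : List ℕ} {p : PP} : leP (ps s') p ↔ s' <+: p.1 := by
  constructor
  · exact fun h => h.1
  · intro h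
    refine ⟨h, by simp [ps], ?_⟩
    intro j _ _ i hi
    simp [ps] at hi

lemma pat_P (i : II) (s : List ℕ) :
    PCompat leP (([], {i}) : PP) (ps s) ↔ Avoid s (xfam i) := by
  constructor
  · rintro ⟨r, h1, h2⟩
    intro j hj
    have hjr : j < r.1.length := lt_of_lt_of_le hj (leP_ps.1 h2).length_le
    have havd := h1.2.2 j (by simp) hjr i (by simp)
    rw [prefix_getD_eq (leP_ps.1 h2) hj] at havd
    exact havd
  · intro hAv
    refine ⟨(s, {i}), ⟨List.nil_prefix, by simp, ?_⟩, leP_ps.2 (List.prefix_refl s)⟩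
    intro j _ hj i' hi'
    simp only [Finset.mem_singleton] at hi'
    subst hi'
    exact hAv j hj

section WithEmbedding

variable (T : SouslinCCC) (e : PP → NN)

/-- the set of reals whose avoidance pattern is realized in `T` -/
def Bset : Set NN := {y : NN | ∃ q : NN, q ∈ T.Q ∧ ∀ s : List ℕ,
  (Avoid s y → QCompat T.Q T.le q (e (ps s))) ∧
  (¬ Avoid s y → ¬ QCompat T.Q T.le q (e (ps s)))}

variable {T e}

lemma xfam_mem_Bset (hce : CompleteEmbedding leP T e) (i : II) : xfam i ∈ Bset T e := by
  refine ⟨e (([], {i}) : PP), hce.1 _, ?_⟩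
  intro s
  have hiff : PCompat leP (([], {i}) : PP) (ps s) ↔
      QCompat T.Q T.le (e (([], {i}) : PP)) (e (ps s)) :=
    not_iff_not.1 (hce.2.2.1 (([], {i}) : PP) (ps s))
  constructor
  · intro hAv
    exact hiff.1 ((pat_P i s).2 hAv)
  · intro hAv hQC
    exact hAv ((pat_P i s).1 (hiff.2 hQC))

lemma Bset_nb (hce : CompleteEmbedding leP T e) {y : NN} (hy : y ∈ Bset T e) :
    ¬ HasBranch (Tr y) := by
  obtain ⟨q, hq, hpat⟩ := hy
  -- step 1 : the values of y are eventually covered by finitely many xfam's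
  have hcov : ∃ (F : Finset II) (n : ℕ), ∀ j, n ≤ j → ∃ i ∈ F, y j = xfam i j := by
    by_contra hno
    push_neg at hno
    have hdense : ∀ p : PP, ∃ p', leP p p' ∧ p' ∈ {p : PP | ∃ j < p.1.length, p.1.getD j 0 = y j} := by
      rintro ⟨s, F⟩
      obtain ⟨j, hj1, hj2⟩ := hno F s.length
      have hlen : (s ++ (List.replicate (j - s.length) 0 ++ [y j])).length = j + 1 := by
        simp
        omega
      refine ⟨(s ++ (List.replicate (j - s.length) 0 ++ [y j]), F), ⟨⟨_, rfl⟩, subset_rfl, ?_⟩, ?_⟩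
      · intro j' h1 h2 i hi
        rw [List.getD_append_right _ _ _ _ h1]
        by_cases hcase : j' - s.length < j - s.length
        · rw [List.getD_append _ _ _ _ (by simpa using hcase)]
          have : (List.replicate (j - s.length) (0:ℕ)).getD (j' - s.length) 0 = 0 := by
            rw [List.getD_eq_getElem _ _ (by simpa using hcase)]
            simp
          rw [this]
          exact (xfam_ne_zero i j').symm
        · have hj' : j' = j := by
            rw [hlen] at h2
            have h1' : s.length ≤ j' := h1
            omega
          subst hj'
          rw [List.getD_append_right _ _ _ _ (by simpa using hcase)]
          have : j' - s.length - (List.replicate (j' - s.length) (0:ℕ)).length = 0 := by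
            simp
          rw [this]
          simp only [List.getD_cons_zero]
          exact fun hcon => (hj2 i hi) hcon
      · refine ⟨j, ?_, ?_⟩
        · rw [hlen]; omega
        · show (s ++ (List.replicate (j - s.length) 0 ++ [y j])).getD j 0 = y j
          rw [List.getD_append_right _ _ _ _ hj1,
            List.getD_append_right _ _ _ _ (by simp)]
          simp
    obtain ⟨A, hAD, hAmax⟩ := exists_max_antichain hdense
    have hTmax := hce.2.2.2 A hAmax
    obtain ⟨q', hq'mem, hcomp⟩ := hTmax.2.2 q hq
    obtain ⟨a, haA, rfl⟩ := hq'mem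
    obtain ⟨j, hjlen, hjval⟩ := hAD haA
    obtain ⟨r, hrQ, hqr, har⟩ := hcomp
    have hps : leP (ps a.1) a := leP_ps.2 (List.prefix_refl _)
    have hle2 : T.le (e (ps a.1)) (e a) := hce.2.1 _ _ hps
    have hle3 : T.le (e (ps a.1)) r :=
      T.trans _ (hce.1 _) _ (hce.1 _) _ hrQ hle2 har
    have hQC : QCompat T.Q T.le q (e (ps a.1)) := ⟨r, hrQ, hqr, hle3⟩
    have hnav : ¬ Avoid a.1 y := fun hAv => (hAv j hjlen) hjval
    exact (hpat a.1).2 hnav hQC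
  obtain ⟨F, n, hcov⟩ := hcov
  rintro ⟨z, hz⟩
  have hval : ∀ k, y (encL (pre z k)) = 2 := fun k => hz k (pre z k) (List.prefix_refl _)
  have hFne : F.Nonempty := by
    obtain ⟨i, hi, -⟩ := hcov n le_rfl
    exact ⟨i, hi⟩
  obtain ⟨i0, hi0⟩ := hFne
  -- total selection
  have hselx : ∀ k : ℕ, ∃ i : II, i ∈ F ∧ (n ≤ encL (pre z k) → pre z k ∈ Sfam i) := by
    intro k
    by_cases hk : n ≤ encL (pre z k)
    · obtain ⟨i, hiF, hival⟩ := hcov (encL (pre z k)) hk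
      refine ⟨i, hiF, fun _ => ?_⟩
      have h2 : xfam i (encL (pre z k)) = 2 := by rw [← hival]; exact hval k
      exact (encodeTree_eq_two_iff _ _).1 h2
    · exact ⟨i0, hi0, fun h => absurd h hk⟩
  choose selT hselF hselS using hselx
  -- the set of k with large codes is infinite
  have hfin : {k : ℕ | encL (pre z k) < n}.Finite := by
    have hinj : Set.InjOn (fun k => encL (pre z k)) {k : ℕ | encL (pre z k) < n} := by
      intro k1 _ k2 _ h
      exact pre_inj z (Encodable.encode_injective h)
    have : {k : ℕ | encL (pre z k) < n} =
        ((fun k => encL (pre z k)) ⁻¹' (Set.Iio n)) := rfl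
    rw [this]
    exact Set.Finite.preimage (by rw [← this]; exact hinj) (Set.finite_Iio n)
  have hK : {k : ℕ | n ≤ encL (pre z k)}.Infinite := by
    have : {k : ℕ | n ≤ encL (pre z k)} = {k : ℕ | encL (pre z k) < n}ᶜ := by
      ext k; simp [not_lt]
    rw [this]
    exact hfin.infinite_compl
  -- pigeonhole
  have hpig : ∃ i ∈ F, {k : ℕ | n ≤ encL (pre z k) ∧ selT k = i}.Infinite := by
    by_contra hnopig
    push_neg at hnopig
    have hsub : {k : ℕ | n ≤ encL (pre z k)} ⊆
        ⋃ i ∈ F, {k : ℕ | n ≤ encL (pre z k) ∧ selT k = i} := by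
      intro k hk
      exact Set.mem_biUnion (hselF k) ⟨hk, rfl⟩
    apply hK
    apply Set.Finite.subset _ hsub
    apply Set.Finite.biUnion F.finite_toSet
    intro i hi
    rw [← Set.not_infinite]
    exact Set.not_infinite.2 (hnopig i hi)
  obtain ⟨i, hiF, hinf⟩ := hpig
  apply Sfam_nb i
  refine ⟨z, fun k => ?_⟩
  have hgt : ∃ k' ∈ {k : ℕ | n ≤ encL (pre z k) ∧ selT k = i}, k ≤ k' := by
    by_contra hlt
    push_neg at hlt
    apply hinf
    apply Set.Finite.subset (Set.finite_Iio k)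
    intro k' hk'
    exact hlt k' hk'
  obtain ⟨k', hk', hkk'⟩ := hgt
  have hmem : pre z k' ∈ Sfam i := by
    rw [← hk'.2]
    exact hselS k' hk'.1
  exact Sfam_pc i (pre_prefix z hkk') hmem

end WithEmbedding

/-! ### Analyticity of the pattern sets -/

/-- unpacking countably many members of Baire space from one -/
def unp (t : ℕ) (w : NN) : NN := fun j => w (Nat.pair t j)

lemma continuous_unp (t : ℕ) : Continuous (unp t) :=
  continuous_pi fun j => continuous_apply (Nat.pair t j)

lemma isClopen_case {X : Type*} [TopologicalSpace X] {g : X → ℕ} (hg : Continuous g)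
    (S : ℕ → Set X) (hS : ∀ m, IsClopen (S m)) : IsClopen {x | x ∈ S (g x)} := by
  have h1 : {x | x ∈ S (g x)} = ⋃ m, ({x | g x = m} ∩ S m) := by
    ext x
    simp only [Set.mem_setOf_eq, Set.mem_iUnion, Set.mem_inter_iff]
    exact ⟨fun h => ⟨g x, rfl, h⟩, by rintro ⟨m, rfl, h⟩; exact h⟩
  have h2 : {x | x ∈ S (g x)}ᶜ = ⋃ m, ({x | g x = m} ∩ (S m)ᶜ) := by
    ext x
    simp only [Set.mem_compl_iff, Set.mem_setOf_eq, Set.mem_iUnion, Set.mem_inter_iff]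
    exact ⟨fun h => ⟨g x, rfl, h⟩, by rintro ⟨m, rfl, h⟩; exact h⟩
  constructor
  · rw [← isOpen_compl_iff, h2]
    exact isOpen_iUnion fun m =>
      (((isClopen_discrete ({m} : Set ℕ)).preimage hg).isOpen).inter (hS m).compl.isOpen
  · rw [h1]
    exact isOpen_iUnion fun m =>
      (((isClopen_discrete ({m} : Set ℕ)).preimage hg).isOpen).inter (hS m).isOpen

lemma isClopen_const {X : Type*} [TopologicalSpace X] (P : Prop) : IsClopen {x : X | P} := by
  by_cases h : P
  · have : {x : X | P} = Set.univ := by simp [h]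
    rw [this]; exact isClopen_univ
  · have : {x : X | P} = ∅ := by simp [h]
    rw [this]; exact isClopen_empty

lemma isClopen_rel2 {X : Type*} [TopologicalSpace X] {g1 g2 : X → ℕ} (h1 : Continuous g1)
    (h2 : Continuous g2) (R : ℕ → ℕ → Prop) : IsClopen {x | R (g1 x) (g2 x)} := by
  have := isClopen_case h1 (fun m => {x : X | R m (g2 x)})
    (fun m => isClopen_case h2 (fun m' => {x : X | R m m'}) (fun m' => isClopen_const _))
  exact this

lemma isClopen_memTr (σ : List ℕ) : IsClopen {y : NN | σ ∈ Tr y} := by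
  have h1 : {y : NN | σ ∈ Tr y} = ⋂ τ ∈ σ.inits.toFinset, {y : NN | y (encL τ) = 2} := by
    ext y
    simp only [Set.mem_setOf_eq, Set.mem_iInter, List.mem_toFinset, List.mem_inits]
    exact ⟨fun h τ hτ => h τ hτ, fun h τ hτ => h τ hτ⟩
  rw [h1]
  exact isClopen_biInter_finset fun τ _ => isClopen_coord (encL τ) 2

lemma isClopen_avoid (s : List ℕ) : IsClopen {y : NN | Avoid s y} := by
  have h1 : {y : NN | Avoid s y} =
      ⋂ j ∈ Finset.range s.length, ({y : NN | y j = s.getD j 0})ᶜ := by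
    ext y
    simp only [Set.mem_setOf_eq, Set.mem_iInter, Finset.mem_range, Set.mem_compl_iff]
    constructor
    · intro h j hj hv
      exact (h j hj) hv.symm
    · intro h j hj hv
      exact (h j hj) hv.symm
  rw [h1]
  exact isClopen_biInter_finset fun j _ => (isClopen_coord j (s.getD j 0)).compl

/-- decoding a function on finite sequences from a member of Baire space -/
def decF (h : NN) (σ : List ℕ) : List ℕ :=
  ((Encodable.decode (h (encL σ)) : Option (List ℕ))).getD []

/-- tags for packing witnesses -/
def tg (s : List ℕ) (c : ℕ) : ℕ := Nat.pair (encL s) c + 2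

section ClosedSets

variable (e : PP → NN) (CQ : Set (NN × NN)) (CL CI : Set ((NN × NN) × NN))

/-- the closed set witnessing analyticity of `Bset` -/
def Bcl : Set (NN × NN) :=
  {p : NN × NN | ((unp 0 p.2, unp 1 p.2) ∈ CQ) ∧ ∀ s : List ℕ,
    (Avoid s p.1 → (((unp 0 p.2, unp (tg s 0) p.2), unp (tg s 1) p.2) ∈ CL ∧
      ((e (ps s), unp (tg s 0) p.2), unp (tg s 2) p.2) ∈ CL)) ∧
    (¬ Avoid s p.1 → ((unp 0 p.2, e (ps s)), unp (tg s 3) p.2) ∈ CI)}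

/-- the closed set witnessing analyticity of `Eset` -/
def Ecl : Set (NN × NN) :=
  {p : NN × NN | (p.1 : NN) = p.1 ∧ ((unp 0 p.2, unp 1 p.2) ∈ Bcl e CQ CL CI) ∧
    ∀ σ : List ℕ,
      (σ ∈ Tr p.1 → decF (unp 2 p.2) σ ∈ Tr (unp 0 p.2)) ∧
      ∀ k : ℕ, σ ++ [k] ∈ Tr p.1 →
        (decF (unp 2 p.2) σ <+: decF (unp 2 p.2) (σ ++ [k]) ∧
         decF (unp 2 p.2) σ ≠ decF (unp 2 p.2) (σ ++ [k]))}

variable {CQ CL CI}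

lemma isClosed_Bcl (hCQ : IsClosed CQ) (hCL : IsClosed CL) (hCI : IsClosed CI) :
    IsClosed (Bcl e CQ CL CI) := by
  have hsplit : Bcl e CQ CL CI =
      ((fun p : NN × NN => (unp 0 p.2, unp 1 p.2)) ⁻¹' CQ) ∩
      ⋂ s : List ℕ,
        ((({p : NN × NN | Avoid s p.1})ᶜ ∪
          (((fun p : NN × NN => ((unp 0 p.2, unp (tg s 0) p.2), unp (tg s 1) p.2)) ⁻¹' CL) ∩
           ((fun p : NN × NN => ((e (ps s), unp (tg s 0) p.2), unp (tg s 2) p.2)) ⁻¹' CL))) ∩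
         (({p : NN × NN | Avoid s p.1}) ∪
          ((fun p : NN × NN => ((unp 0 p.2, e (ps s)), unp (tg s 3) p.2)) ⁻¹' CI))) := by
    ext p
    simp only [Bcl, Set.mem_setOf_eq, Set.mem_inter_iff, Set.mem_iInter, Set.mem_union,
      Set.mem_preimage, Set.mem_compl_iff]
    constructor
    · rintro ⟨h0, hs⟩
      refine ⟨h0, fun s => ⟨?_, ?_⟩⟩
      · by_cases hAv : Avoid s p.1
        · exact Or.inr ((hs s).1 hAv)
        · exact Or.inl hAv
      · by_cases hAv : Avoid s p.1
        · exact Or.inl hAv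
        · exact Or.inr ((hs s).2 hAv)
    · rintro ⟨h0, hs⟩
      refine ⟨h0, fun s => ⟨?_, ?_⟩⟩
      · intro hAv
        rcases (hs s).1 with h | h
        · exact absurd hAv h
        · exact h
      · intro hAv
        rcases (hs s).2 with h | h
        · exact absurd h hAv
        · exact h
  rw [hsplit]
  have hcu : ∀ t : ℕ, Continuous fun p : NN × NN => unp t p.2 :=
    fun t => (continuous_unp t).comp continuous_snd
  apply IsClosed.inter
  · exact hCQ.preimage ((hcu 0).prodMk (hcu 1))
  · apply isClosed_iInter
    intro s
    apply IsClosed.inter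
    · apply IsClosed.union
      · exact (((isClopen_avoid s).preimage continuous_fst).compl).isClosed
      · exact (hCL.preimage (((hcu 0).prodMk (hcu (tg s 0))).prodMk (hcu (tg s 1)))).inter
          (hCL.preimage ((continuous_const.prodMk (hcu (tg s 0))).prodMk (hcu (tg s 2))))
    · apply IsClosed.union
      · exact ((isClopen_avoid s).preimage continuous_fst).isClosed
      · exact hCI.preimage (((hcu 0).prodMk continuous_const).prodMk (hcu (tg s 3)))

lemma isClosed_Ecl (hCQ : IsClosed CQ) (hCL : IsClosed CL) (hCI : IsClosed CI) :
    IsClosed (Ecl e CQ CL CI) := by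
  have hcu : ∀ t : ℕ, Continuous fun p : NN × NN => unp t p.2 :=
    fun t => (continuous_unp t).comp continuous_snd
  have hg : ∀ σ : List ℕ, Continuous fun p : NN × NN => (unp 2 p.2) (encL σ) :=
    fun σ => (continuous_apply (encL σ)).comp (hcu 2)
  have hsplit : Ecl e CQ CL CI =
      ((fun p : NN × NN => (unp 0 p.2, unp 1 p.2)) ⁻¹' (Bcl e CQ CL CI)) ∩
      ⋂ σ : List ℕ,
        ((({p : NN × NN | σ ∈ Tr p.1})ᶜ ∪
           {p : NN × NN | ((Encodable.decode ((unp 2 p.2) (encL σ)) : Option (List ℕ)).getD [])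
              ∈ Tr (unp 0 p.2)}) ∩
         ⋂ k : ℕ,
           (({p : NN × NN | σ ++ [k] ∈ Tr p.1})ᶜ ∪
            {p : NN × NN |
              (fun a b : ℕ =>
                ((Encodable.decode a : Option (List ℕ)).getD [] <+:
                  (Encodable.decode b : Option (List ℕ)).getD []) ∧
                 (Encodable.decode a : Option (List ℕ)).getD [] ≠
                  (Encodable.decode b : Option (List ℕ)).getD [])
              ((unp 2 p.2) (encL σ)) ((unp 2 p.2) (encL (σ ++ [k])))})) := by
    ext p
    simp only [Ecl, decF, Set.mem_setOf_eq, Set.mem_inter_iff, Set.mem_iInter, Set.mem_union,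
      Set.mem_preimage, Set.mem_compl_iff]
    constructor
    · rintro ⟨-, h0, hs⟩
      refine ⟨h0, fun σ => ⟨?_, fun k => ?_⟩⟩
      · by_cases hm : σ ∈ Tr p.1
        · exact Or.inr ((hs σ).1 hm)
        · exact Or.inl hm
      · by_cases hm : σ ++ [k] ∈ Tr p.1
        · exact Or.inr ((hs σ).2 k hm)
        · exact Or.inl hm
    · rintro ⟨h0, hs⟩
      refine ⟨trivial, h0, fun σ => ⟨?_, fun k hm => ?_⟩⟩
      · intro hm
        rcases (hs σ).1 with h | h
        · exact absurd hm h
        · exact h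
      · rcases (hs σ).2 k with h | h
        · exact absurd hm h
        · exact h
  rw [hsplit]
  apply IsClosed.inter
  · exact (isClosed_Bcl e hCQ hCL hCI).preimage ((hcu 0).prodMk (hcu 1))
  · apply isClosed_iInter
    intro σ
    apply IsClosed.inter
    · apply IsClosed.union
      · exact (((isClopen_memTr σ).preimage continuous_fst).compl).isClosed
      · have := isClopen_case (hg σ)
          (fun m => {p : NN × NN |
            ((Encodable.decode m : Option (List ℕ)).getD []) ∈ Tr (unp 0 p.2)})
          (fun m => (isClopen_memTr _).preimage (hcu 0))
        exact this.isClosed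
    · apply isClosed_iInter
      intro k
      apply IsClosed.union
      · exact (((isClopen_memTr (σ ++ [k])).preimage continuous_fst).compl).isClosed
      · exact (isClopen_rel2 (hg σ) (hg (σ ++ [k]))
          (fun a b => ((Encodable.decode a : Option (List ℕ)).getD [] <+:
              (Encodable.decode b : Option (List ℕ)).getD []) ∧
            (Encodable.decode a : Option (List ℕ)).getD [] ≠
              (Encodable.decode b : Option (List ℕ)).getD [])).isClosed

end ClosedSets

/-! ### The pattern sets are analytic -/

lemma mem_Bset_iff_Bcl {T : SouslinCCC} {e : PP → NN} (hce : CompleteEmbedding leP T e)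
    {CQ : Set (NN × NN)} {CL CI : Set ((NN × NN) × NN)}
    (hCQ : ∀ v : NN, v ∈ T.Q ↔ ∃ w : NN, (v, w) ∈ CQ)
    (hCL : ∀ pr : NN × NN, (pr.1 ∈ T.Q ∧ pr.2 ∈ T.Q ∧ T.le pr.1 pr.2) ↔ ∃ w, (pr, w) ∈ CL)
    (hCI : ∀ pr : NN × NN, (pr.1 ∈ T.Q ∧ pr.2 ∈ T.Q ∧ ¬ QCompat T.Q T.le pr.1 pr.2) ↔
      ∃ w, (pr, w) ∈ CI)
    (y : NN) : y ∈ Bset T e ↔ ∃ W : NN, (y, W) ∈ Bcl e CQ CL CI := by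
  constructor
  · rintro ⟨q, hq, hpat⟩
    obtain ⟨wq, hwq⟩ := (hCQ q).1 hq
    have hdata : ∀ s : List ℕ, ∃ d : NN × NN × NN × NN,
        (Avoid s y → (((q, d.1), d.2.1) ∈ CL ∧ ((e (ps s), d.1), d.2.2.1) ∈ CL)) ∧
        (¬ Avoid s y → ((q, e (ps s)), d.2.2.2) ∈ CI) := by
      intro s
      by_cases hAv : Avoid s y
      · obtain ⟨r, hrQ, h1, h2⟩ := (hpat s).1 hAv
        obtain ⟨w1, hw1⟩ := (hCL (q, r)).1 ⟨hq, hrQ, h1⟩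
        obtain ⟨w2, hw2⟩ := (hCL (e (ps s), r)).1 ⟨hce.1 _, hrQ, h2⟩
        exact ⟨(r, w1, w2, q), fun _ => ⟨hw1, hw2⟩, fun h => absurd hAv h⟩
      · obtain ⟨w3, hw3⟩ := (hCI (q, e (ps s))).1 ⟨hq, hce.1 _, (hpat s).2 hAv⟩
        exact ⟨(q, q, q, w3), fun h => absurd h hAv, fun _ => hw3⟩
    choose df hdf1 hdf2 using hdata
    refine ⟨fun m =>
      (fun t j =>
        if t = 0 then q j
        else if t = 1 then wq j
        else
          ((fun s : List ℕ =>
            (fun c : ℕ =>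
              if c = 0 then (df s).1 j
              else if c = 1 then (df s).2.1 j
              else if c = 2 then (df s).2.2.1 j
              else (df s).2.2.2 j)
            (Nat.unpair (t - 2)).2)
          ((Encodable.decode (Nat.unpair (t - 2)).1 : Option (List ℕ)).getD [])))
      (Nat.unpair m).1 (Nat.unpair m).2, ?_⟩
    set W : NN := fun m =>
      (fun t j =>
        if t = 0 then q j
        else if t = 1 then wq j
        else
          ((fun s : List ℕ =>
            (fun c : ℕ =>
              if c = 0 then (df s).1 j
              else if c = 1 then (df s).2.1 j
              else if c = 2 then (df s).2.2.1 j
              else (df s).2.2.2 j)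
            (Nat.unpair (t - 2)).2)
          ((Encodable.decode (Nat.unpair (t - 2)).1 : Option (List ℕ)).getD [])))
      (Nat.unpair m).1 (Nat.unpair m).2 with hWdef
    have e0 : unp 0 W = q := by
      funext j
      show W (Nat.pair 0 j) = q j
      rw [hWdef]
      simp [Nat.unpair_pair]
    have e1 : unp 1 W = wq := by
      funext j
      show W (Nat.pair 1 j) = wq j
      rw [hWdef]
      simp [Nat.unpair_pair]
    have key : ∀ (s : List ℕ) (c : ℕ), unp (tg s c) W = fun j =>
        if c = 0 then (df s).1 j else if c = 1 then (df s).2.1 j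
        else if c = 2 then (df s).2.2.1 j else (df s).2.2.2 j := by
      intro s c
      funext j
      show W (Nat.pair (tg s c) j) = _
      rw [hWdef]
      have h3 : tg s c ≠ 0 := by unfold tg; omega
      have h4 : tg s c ≠ 1 := by unfold tg; omega
      have h5 : tg s c - 2 = Nat.pair (encL s) c := by unfold tg; omega
      simp only [Nat.unpair_pair, if_neg h3, if_neg h4, h5, Encodable.encodek,
        Option.getD_some]
    have key0 : ∀ s : List ℕ, unp (tg s 0) W = (df s).1 := by
      intro s; rw [key s 0]; funext j; simp
    have key1 : ∀ s : List ℕ, unp (tg s 1) W = (df s).2.1 := by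
      intro s; rw [key s 1]; funext j; simp
    have key2 : ∀ s : List ℕ, unp (tg s 2) W = (df s).2.2.1 := by
      intro s; rw [key s 2]; funext j; simp
    have key3 : ∀ s : List ℕ, unp (tg s 3) W = (df s).2.2.2 := by
      intro s; rw [key s 3]; funext j; simp
    have hgoal : ((y, W) ∈ Bcl e CQ CL CI) =
        (((unp 0 W, unp 1 W) ∈ CQ) ∧ ∀ s : List ℕ,
          (Avoid s y → (((unp 0 W, unp (tg s 0) W), unp (tg s 1) W) ∈ CL ∧
            ((e (ps s), unp (tg s 0) W), unp (tg s 2) W) ∈ CL)) ∧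
          (¬ Avoid s y → ((unp 0 W, e (ps s)), unp (tg s 3) W) ∈ CI)) := rfl
    rw [hgoal, e0, e1]
    refine ⟨hwq, fun s => ⟨?_, ?_⟩⟩
    · intro hAv
      rw [key0, key1, key2]
      exact hdf1 s hAv
    · intro hAv
      rw [key3]
      exact hdf2 s hAv
  · rintro ⟨W, hW⟩
    refine ⟨unp 0 W, (hCQ _).2 ⟨unp 1 W, hW.1⟩, ?_⟩
    intro s
    constructor
    · intro hAv
      obtain ⟨m1, m2⟩ := (hW.2 s).1 hAv
      obtain ⟨-, hrQ, hle1⟩ := (hCL (unp 0 W, unp (tg s 0) W)).2 ⟨_, m1⟩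
      obtain ⟨-, -, hle2⟩ := (hCL (e (ps s), unp (tg s 0) W)).2 ⟨_, m2⟩
      exact ⟨unp (tg s 0) W, hrQ, hle1, hle2⟩
    · intro hAv
      obtain ⟨-, -, hni⟩ := (hCI (unp 0 W, e (ps s))).2 ⟨_, (hW.2 s).2 hAv⟩
      exact hni

/-- the embeddability closure of `Bset` -/
def Eset (T : SouslinCCC) (e : PP → NN) : Set NN :=
  {y : NN | ∃ y' h : NN, y' ∈ Bset T e ∧ IsEmb (decF h) (Tr y) (Tr y')}

lemma mem_Eset_iff_Ecl {T : SouslinCCC} {e : PP → NN} (hce : CompleteEmbedding leP T e)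
    {CQ : Set (NN × NN)} {CL CI : Set ((NN × NN) × NN)}
    (hCQ : ∀ v : NN, v ∈ T.Q ↔ ∃ w : NN, (v, w) ∈ CQ)
    (hCL : ∀ pr : NN × NN, (pr.1 ∈ T.Q ∧ pr.2 ∈ T.Q ∧ T.le pr.1 pr.2) ↔ ∃ w, (pr, w) ∈ CL)
    (hCI : ∀ pr : NN × NN, (pr.1 ∈ T.Q ∧ pr.2 ∈ T.Q ∧ ¬ QCompat T.Q T.le pr.1 pr.2) ↔
      ∃ w, (pr, w) ∈ CI)
    (y : NN) : y ∈ Eset T e ↔ ∃ W : NN, (y, W) ∈ Ecl e CQ CL CI := by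
  constructor
  · rintro ⟨y', h, hB, hEmb⟩
    obtain ⟨W', hW'⟩ := (mem_Bset_iff_Bcl hce hCQ hCL hCI y').1 hB
    refine ⟨fun m =>
      (fun t j => if t = 0 then y' j else if t = 1 then W' j else h j)
        (Nat.unpair m).1 (Nat.unpair m).2, ?_⟩
    set W : NN := fun m =>
      (fun t j => if t = 0 then y' j else if t = 1 then W' j else h j)
        (Nat.unpair m).1 (Nat.unpair m).2 with hWdef
    have e0 : unp 0 W = y' := by
      funext j; show W (Nat.pair 0 j) = y' j; rw [hWdef]; simp [Nat.unpair_pair]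
    have e1 : unp 1 W = W' := by
      funext j; show W (Nat.pair 1 j) = W' j; rw [hWdef]; simp [Nat.unpair_pair]
    have e2 : unp 2 W = h := by
      funext j; show W (Nat.pair 2 j) = h j; rw [hWdef]; simp [Nat.unpair_pair]
    refine ⟨rfl, ?_, ?_⟩
    · rw [e0, e1]; exact hW'
    · intro σ
      rw [e0, e2]
      exact ⟨(hEmb σ).1, (hEmb σ).2⟩
  · rintro ⟨W, hW⟩
    refine ⟨unp 0 W, unp 2 W, (mem_Bset_iff_Bcl hce hCQ hCL hCI _).2 ⟨unp 1 W, hW.2.1⟩, ?_⟩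
    intro σ
    exact ⟨(hW.2.2 σ).1, (hW.2.2 σ).2⟩

lemma Eset_char {T : SouslinCCC} {e : PP → NN} (hce : CompleteEmbedding leP T e) (y : NN) :
    y ∈ Eset T e ↔ ¬ HasBranch (Tr y) := by
  constructor
  · rintro ⟨y', h, hB, hEmb⟩ hbr
    exact Bset_nb hce hB (hEmb.push (Tr_pc y') hbr)
  · intro hnb
    obtain ⟨i, f, hf⟩ := exists_emb (Tr_pc y) hnb
    refine ⟨xfam i, fun m => encL (f ((Encodable.decode m : Option (List ℕ)).getD [])),
      xfam_mem_Bset hce i, ?_⟩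
    have hdec : decF (fun m => encL (f ((Encodable.decode m : Option (List ℕ)).getD []))) = f := by
      funext σ
      simp [decF, Encodable.encodek]
    rw [hdec, Tr_xfam]
    exact hf

theorem no_embed (T : SouslinCCC) (e : PP → NN) (hce : CompleteEmbedding leP T e) : False := by
  obtain ⟨CQ, hCQc, hCQ⟩ := AnW_of_analytic T.analytic_cond
  obtain ⟨CL, hCLc, hCL⟩ := AnW_of_analytic T.analytic_le
  obtain ⟨CI, hCIc, hCI⟩ := AnW_of_analytic T.analytic_incompat
  apply master (E := Eset T e)
  · exact ⟨Ecl e CQ CL CI, isClosed_Ecl e hCQc hCLc hCIc,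
      fun y => mem_Eset_iff_Ecl hce (fun v => hCQ v) (fun pr => hCL pr) (fun pr => hCI pr) y⟩
  · exact fun y => Eset_char hce y


/-- If the continuum is greater than `ℵ₁` then there is a σ-centered forcing notion
(a partial order) of cardinality `ℵ₁` which cannot be completely embedded into any
ccc Souslin forcing notion. -/
theorem exists_small_sigma_centered_not_embeddable
    (hc : Cardinal.aleph 1 < Cardinal.continuum) :
    ∃ (P : Type) (leP : P → P → Prop),
      (∀ p : P, leP p p) ∧
      (∀ p q r : P, leP p q → leP q r → leP p r) ∧
      (∀ p q : P, leP p q → leP q p → p = q) ∧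
      PSigmaCentered leP ∧
      Cardinal.mk P = Cardinal.aleph 1 ∧
      ∀ (T : SouslinCCC) (e : P → (ℕ → ℕ)), ¬ CompleteEmbedding leP T e := by
  
  refine ⟨PP, leP, leP_refl, fun p q r h1 h2 => leP_trans h1 h2,
    fun p q h1 h2 => leP_antisymm h1 h2, leP_sigma_centered, mk_PP, ?_⟩
  intro T e hce
  exact no_embed T e hce

end
end
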